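/- arXiv:1512.09201 — 7 statements merged into one kernel-verified Lean document; each statement's English description precedes it below -/
import Mathlib

section
/- Let μ > 0, ν > -1, let n, m be positive integers, and let α > m+n be real. For every (z,w) ∈ D_{n,m}(μ), ∑_{p∈ℕ^n, q∈ℕ^m} ( (μ((ν+1)α+|q|))^{|p|} · χ(α,|q|) / (∏_{i=1}^n Γ(p_i+1) · ∏_{j=1}^m Γ(q_j+1)) ) · |z|^{2p}·|w|^{2q} = (α-m-n)_{m+n} · exp(μ(ν+1)α‖z‖²) · ∑_{q∈ℕ^m} ψ(α,|q|) · Γ(|q|+α)/(Γ(α)·∏_{i=1}^m Γ(q_i+1)) · |w̃|^{2q}, both series being convergent. (The left-hand side is the diagonal of the Bergman kernel K_α(z,w,z̄,w̄) of the weighted Hilbert space of holomorphic functions on D_{n,m}(μ) square-integrable against exp(-αΦ) times the volume form of g(μ;ν).) -/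
open Finset

/-- Pochhammer symbol `(a)_k = a(a+1)⋯(a+k-1)`. -/
noncomputable def poch (a : ℝ) (k : ℕ) : ℝ := ∏ i ∈ Finset.range k, (a + i)

/-- `χ(α,k)` from the paper. -/
noncomputable def chi (ν α : ℝ) (n m k : ℕ) : ℝ :=
  ((ν + 1) * α + k) ^ n /
    ∑ d ∈ Finset.range (n + 1),
      (n.choose d : ℝ) * ν ^ (n - d) * Real.Gamma (α - m - d) / Real.Gamma (α - d + k)

/-- `ψ(α,k) = Γ(α-m-n)·χ(α,k)/Γ(α+k)`. -/
noncomputable def psi (ν α : ℝ) (n m k : ℕ) : ℝ :=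
  Real.Gamma (α - m - n) * chi ν α n m k / Real.Gamma (α + k)

section FBH
open Nat Filter Topology

lemma gamma_shift (a : ℝ) (ha : 0 < a) (N : ℕ) :
    Real.Gamma (a + N) = Real.Gamma a * ∏ i ∈ Finset.range N, (a + i) := by
  induction N with
  | zero => simp
  | succ N ih =>
    rw [Finset.prod_range_succ, ← mul_assoc, ← ih]
    have h1 : a + (N + 1 : ℕ) = (a + N) + 1 := by push_cast; ring
    rw [h1, Real.Gamma_add_one (by positivity)]
    ring

lemma exp_hasSum (x : ℝ) : HasSum (fun k : ℕ => x ^ k / k !) (Real.exp x) := by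
  have h := (Real.summable_pow_div_factorial x).hasSum
  rwa [show ∑' k : ℕ, x ^ k / k ! = Real.exp x by
    rw [Real.exp_eq_exp_ℝ, NormedSpace.exp_eq_tsum_div]] at h

lemma hasSum_mul_prod {β γ : Type*} {f : β → ℝ} {g : γ → ℝ} {a b : ℝ}
    (hf0 : ∀ x, 0 ≤ f x) (hg0 : ∀ x, 0 ≤ g x) (hf : HasSum f a) (hg : HasSum g b) :
    HasSum (fun x : β × γ => f x.1 * g x.2) (a * b) := by
  have hs : Summable (fun x : β × γ => f x.1 * g x.2) :=
    Summable.mul_of_nonneg hf.summable hg.summable hf0 hg0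
  have := hs.hasSum
  rwa [show ∑' x : β × γ, f x.1 * g x.2 = a * b by
    rw [hs.tsum_prod]
    simp_rw [tsum_mul_left]
    rw [tsum_mul_right, hg.tsum_eq, hf.tsum_eq]] at this

lemma hasSum_exp_pi (n : ℕ) (c : Fin n → ℝ) (hc : ∀ i, 0 ≤ c i) :
    HasSum (fun p : Fin n → ℕ => ∏ i, c i ^ p i / (p i)!) (Real.exp (∑ i, c i)) := by
  induction n with
  | zero =>
    have h1 : (fun p : Fin 0 → ℕ => ∏ i, c i ^ p i / (p i)!) = fun _ => (1 : ℝ) := by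
      funext p; simp
    rw [h1]
    have := hasSum_single (α := ℝ) (f := fun _ : Fin 0 → ℕ => (1:ℝ))
      (default : Fin 0 → ℕ) (fun b hb => absurd (Subsingleton.elim b default) hb)
    simpa using this
  | succ n ih =>
    have key : HasSum (fun x : ℕ × (Fin n → ℕ) =>
        (c 0 ^ x.1 / (x.1)!) * ∏ i : Fin n, c i.succ ^ x.2 i / (x.2 i)!)
        (Real.exp (c 0) * Real.exp (∑ i : Fin n, c i.succ)) :=
      hasSum_mul_prod (f := fun k : ℕ => c 0 ^ k / k !)
        (g := fun p : Fin n → ℕ => ∏ i : Fin n, c i.succ ^ p i / (p i)!)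
        (fun k => div_nonneg (pow_nonneg (hc 0) _) (Nat.cast_nonneg _))
        (fun p => Finset.prod_nonneg fun i _ =>
          div_nonneg (pow_nonneg (hc _) _) (Nat.cast_nonneg _))
        (exp_hasSum _) (ih (fun i => c i.succ) (fun i => hc _))
    have comp : ((fun p : Fin (n+1) → ℕ => ∏ i, c i ^ p i / (p i)!) ∘
        (Fin.consEquiv (fun _ : Fin (n+1) => ℕ)))
        = fun x : ℕ × (Fin n → ℕ) =>
          (c 0 ^ x.1 / (x.1)!) * ∏ i : Fin n, c i.succ ^ x.2 i / (x.2 i)! := by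
      funext x
      simp only [Function.comp_apply, Fin.consEquiv_apply]
      rw [Fin.prod_univ_succ]
      simp
    rw [Fin.sum_univ_succ, Real.exp_add,
      ← (Fin.consEquiv (fun _ : Fin (n+1) => ℕ)).hasSum_iff, comp]
    exact key

lemma fiber_sum (m k : ℕ) (s : Fin m → ℝ) :
    ∑ q ∈ piAntidiag (univ : Finset (Fin m)) k, ∏ j, s j ^ q j / (q j)!
      = (∑ j, s j) ^ k / k ! := by
  have hmn := Finset.sum_pow_eq_sum_piAntidiag (univ : Finset (Fin m)) s k
  rw [hmn, Finset.sum_div]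
  refine Finset.sum_congr rfl fun q hq => ?_
  rw [Finset.mem_piAntidiag] at hq
  have spec : ((∏ j, (q j)! : ℕ) : ℝ) * (Nat.multinomial univ q : ℝ) = (k ! : ℝ) := by
    rw [← Nat.cast_mul, Nat.multinomial_spec, hq.1]
  have h1 : (0:ℝ) < ∏ j, ((q j)! : ℝ) := by positivity
  have h2 : (0:ℝ) < (k ! : ℝ) := by positivity
  rw [Finset.prod_div_distrib]
  rw [div_eq_div_iff h1.ne' h2.ne']
  push_cast at spec ⊢
  linear_combination (-(∏ x, s x ^ q x)) * spec

lemma subset_biUnion_fibers {m : ℕ} (u : Finset (Fin m → ℕ)) :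
    u ⊆ (Finset.range (u.sup (fun q => ∑ j, q j) + 1)).biUnion
      (fun k => piAntidiag (univ : Finset (Fin m)) k) := by
  intro q hq
  rw [Finset.mem_biUnion]
  refine ⟨∑ j, q j, ?_, ?_⟩
  · rw [Finset.mem_range]
    exact Nat.lt_succ_of_le (Finset.le_sup (f := fun q => ∑ j, q j) hq)
  · rw [Finset.mem_piAntidiag]
    exact ⟨rfl, fun i _ => Finset.mem_univ i⟩

lemma disj_fibers {m : ℕ} (N : ℕ) :
    Set.PairwiseDisjoint ((Finset.range N : Finset ℕ) : Set ℕ)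
      (fun k => piAntidiag (univ : Finset (Fin m)) k) := by
  intro k₁ _ k₂ _ hne
  refine Finset.disjoint_left.mpr fun q hq1 hq2 => ?_
  rw [Finset.mem_piAntidiag] at hq1 hq2
  exact hne (hq1.1 ▸ hq2.1)

lemma sum_fibers_le {m : ℕ} (c : ℕ → ℝ) (hc0 : ∀ k, 0 ≤ c k) (s : Fin m → ℝ)
    (hs : ∀ j, 0 ≤ s j)
    (hcs : Summable (fun k => c k * (∑ j, s j) ^ k / k !)) (N : ℕ) :
    ∑ q ∈ (Finset.range N).biUnion (fun k => piAntidiag (univ : Finset (Fin m)) k),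
      c (∑ j, q j) * ∏ j, s j ^ q j / (q j)!
      ≤ ∑' k, c k * (∑ j, s j) ^ k / k ! := by
  rw [Finset.sum_biUnion (disj_fibers N)]
  have h1 : ∀ k ∈ Finset.range N,
      ∑ q ∈ piAntidiag (univ : Finset (Fin m)) k, c (∑ j, q j) * ∏ j, s j ^ q j / (q j)!
        = c k * (∑ j, s j) ^ k / k ! := by
    intro k _
    rw [mul_div_assoc, ← fiber_sum m k s, Finset.mul_sum]
    refine Finset.sum_congr rfl fun q hq => ?_
    rw [Finset.mem_piAntidiag] at hq
    rw [hq.1]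
  rw [Finset.sum_congr rfl h1]
  refine Summable.sum_le_tsum _ (fun k _ => ?_) hcs
  have h1 : (0:ℝ) ≤ (∑ j, s j) ^ k := pow_nonneg (Finset.sum_nonneg fun j _ => hs j) k
  have h2 : (0:ℝ) < (k ! : ℝ) := by positivity
  exact div_nonneg (mul_nonneg (hc0 k) h1) h2.le

lemma summable_q_of_chi {m : ℕ} (c : ℕ → ℝ) (hc0 : ∀ k, 0 ≤ c k) (s : Fin m → ℝ)
    (hs : ∀ j, 0 ≤ s j)
    (hcs : Summable (fun k => c k * (∑ j, s j) ^ k / k !)) :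
    Summable (fun q : Fin m → ℕ => c (∑ j, q j) * ∏ j, s j ^ q j / (q j)!) := by
  have hnn : ∀ q : Fin m → ℕ, 0 ≤ c (∑ j, q j) * ∏ j, s j ^ q j / (q j)! := by
    intro q
    have : (0:ℝ) ≤ ∏ j, s j ^ q j / (q j)! :=
      Finset.prod_nonneg fun j _ => div_nonneg (pow_nonneg (hs j) _) (by positivity)
    exact mul_nonneg (hc0 _) this
  refine summable_of_sum_le (c := ∑' k, c k * (∑ j, s j) ^ k / k !) hnn (fun u => ?_)
  calc ∑ q ∈ u, c (∑ j, q j) * ∏ j, s j ^ q j / (q j)!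
      ≤ ∑ q ∈ (Finset.range (u.sup (fun q => ∑ j, q j) + 1)).biUnion
          (fun k => piAntidiag (univ : Finset (Fin m)) k),
          c (∑ j, q j) * ∏ j, s j ^ q j / (q j)! :=
        Finset.sum_le_sum_of_subset_of_nonneg (subset_biUnion_fibers u)
          (fun q _ _ => hnn q)
    _ ≤ ∑' k, c k * (∑ j, s j) ^ k / k ! := sum_fibers_le c hc0 s hs hcs _

lemma chi_bound (ν : ℝ) (n m : ℕ) (α : ℝ) (hν : -1 < ν) (hn : 0 < n) (hm : 0 < m)
    (hα : (m : ℝ) + n < α) :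
    ∃ K : ℕ, ∀ k ≥ K, |chi ν α n m k| ≤
      (2 / Real.Gamma (α - m - n)) * ((ν + 1) * α + k) ^ n * Real.Gamma (α - n + k) := by
  have hαpos : (0:ℝ) < α := lt_trans (by positivity) hα
  have hGpos : 0 < Real.Gamma (α - m - n) :=
    Real.Gamma_pos_of_pos (by linarith)
  set G := Real.Gamma (α - m - n) with hG
  set C₀ := ∑ d ∈ Finset.range n, (n.choose d : ℝ) * |ν| ^ (n - d) * Real.Gamma (α - m - d)
    with hC₀
  have hC₀nn : 0 ≤ C₀ := by
    refine Finset.sum_nonneg fun d hd => ?_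
    have : (0:ℝ) < Real.Gamma (α - m - d) := by
      refine Real.Gamma_pos_of_pos ?_
      have : (d:ℝ) ≤ n - 1 := by
        have := Finset.mem_range.mp hd
        have : (d:ℝ) ≤ (n:ℝ) - 1 := by
          have h2 : (d:ℝ) + 1 ≤ n := by exact_mod_cast Finset.mem_range.mp hd
          linarith
        exact this
      linarith
    positivity
  obtain ⟨K, hK⟩ := exists_nat_ge (2 * C₀ / G)
  refine ⟨K, fun k hk => ?_⟩
  have hxk : (1:ℝ) < α - n + k := by
    have : (1:ℝ) ≤ m := by exact_mod_cast hm
    have : (0:ℝ) ≤ k := Nat.cast_nonneg k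
    linarith
  have hΓx : 0 < Real.Gamma (α - n + k) := Real.Gamma_pos_of_pos (by linarith)
  have gam_lb : ∀ d ∈ Finset.range n,
      Real.Gamma (α - n + k) * (α - n + k) ≤ Real.Gamma (α - d + k) := by
    intro d hd
    have hdn : d < n := Finset.mem_range.mp hd
    have hcast : α - d + k = (α - n + k) + ((n - d : ℕ) : ℝ) := by
      rw [Nat.cast_sub hdn.le]; push_cast; ring
    rw [hcast, gamma_shift (α - ↑n + ↑k) (by linarith) (n - d)]
    have hN : n - d ≠ 0 := Nat.sub_ne_zero_of_lt hdn
    obtain ⟨N', hN'⟩ := Nat.exists_eq_succ_of_ne_zero hN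
    have h1 : (1:ℝ) ≤ ∏ i ∈ Finset.range N', (α - ↑n + ↑k + (↑(i+1) : ℝ)) := by
      have := Finset.prod_le_prod (s := Finset.range N') (f := fun _ : ℕ => (1:ℝ))
        (g := fun i : ℕ => α - ↑n + ↑k + (↑(i+1) : ℝ)) (fun i _ => zero_le_one)
        (fun i _ => by
          have : (0:ℝ) ≤ (i:ℝ) := Nat.cast_nonneg i
          push_cast
          linarith)
      simpa using this
    have h2 : α - ↑n + ↑k ≤ (∏ i ∈ Finset.range N', (α - ↑n + ↑k + (↑(i+1) : ℝ))) * (α - ↑n + ↑k + (0:ℕ)) := by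
      have := le_mul_of_one_le_left (show (0:ℝ) ≤ α - ↑n + ↑k by linarith) h1
      simpa using this
    have h3 : Real.Gamma (α - ↑n + ↑k) * (α - ↑n + ↑k)
        ≤ Real.Gamma (α - ↑n + ↑k) * ((∏ i ∈ Finset.range N', (α - ↑n + ↑k + (↑(i+1):ℝ))) * (α - ↑n + ↑k + (0:ℕ))) :=
      mul_le_mul_of_nonneg_left h2 hΓx.le
    calc Real.Gamma (α - ↑n + ↑k) * (α - ↑n + ↑k)
        ≤ Real.Gamma (α - ↑n + ↑k) * ((∏ i ∈ Finset.range N', (α - ↑n + ↑k + (↑(i+1):ℝ))) * (α - ↑n + ↑k + (0:ℕ))) := h3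
      _ = Real.Gamma (α - ↑n + ↑k) * ∏ i ∈ Finset.range (n - d), (α - ↑n + ↑k + ↑i) := by
          rw [hN', Finset.prod_range_succ']
  set D := ∑ d ∈ Finset.range (n + 1),
      (n.choose d : ℝ) * ν ^ (n - d) * Real.Gamma (α - m - d) / Real.Gamma (α - d + k) with hD
  set R := ∑ d ∈ Finset.range n,
      (n.choose d : ℝ) * ν ^ (n - d) * Real.Gamma (α - m - d) / Real.Gamma (α - d + k) with hR
  have hsplit : D = R + G / Real.Gamma (α - n + k) := by
    rw [hD, Finset.sum_range_succ]
    simp [hG, hR]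
  have hRabs : |R| ≤ C₀ / (Real.Gamma (α - n + k) * (α - n + k)) := by
    calc |R| ≤ ∑ d ∈ Finset.range n,
        |(n.choose d : ℝ) * ν ^ (n - d) * Real.Gamma (α - m - d) / Real.Gamma (α - d + k)| :=
          Finset.abs_sum_le_sum_abs _ _
      _ ≤ ∑ d ∈ Finset.range n,
          (n.choose d : ℝ) * |ν| ^ (n - d) * Real.Gamma (α - m - d)
            / (Real.Gamma (α - n + k) * (α - n + k)) := by
          refine Finset.sum_le_sum fun d hd => ?_
          have hdn : d < n := Finset.mem_range.mp hd
          have hΓd : 0 < Real.Gamma (α - m - d) := by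
            refine Real.Gamma_pos_of_pos ?_
            have h2 : (d:ℝ) + 1 ≤ n := by exact_mod_cast hdn
            linarith
          have hΓdk : 0 < Real.Gamma (α - d + k) := by
            have h2 : (d:ℝ) ≤ n := by exact_mod_cast hdn.le
            exact Real.Gamma_pos_of_pos (by linarith)
          rw [abs_div, abs_mul, abs_mul, abs_pow, Nat.abs_cast, abs_of_nonneg hΓd.le, abs_of_nonneg hΓdk.le]
          exact div_le_div_of_nonneg_left (by positivity) (by positivity) (gam_lb d hd)
      _ = C₀ / (Real.Gamma (α - n + k) * (α - n + k)) := by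
          rw [hC₀, Finset.sum_div]
  have hsmall : C₀ / (Real.Gamma (α - n + k) * (α - n + k)) ≤ (G / 2) / Real.Gamma (α - n + k) := by
    rw [div_le_div_iff₀ (by positivity) (by positivity)]
    have h1 : 2 * C₀ ≤ G * K := by
      rw [div_le_iff₀ hGpos] at hK; linarith [hK]
    have h2 : (K:ℝ) ≤ α - n + k := by
      have : (K:ℝ) ≤ k := by exact_mod_cast hk
      have h3 : (1:ℝ) ≤ m := by exact_mod_cast hm
      linarith
    have h4 : G * K ≤ G * (α - n + k) := by nlinarith
    nlinarith [hΓx, hGpos]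
  have hDlb : (G / 2) / Real.Gamma (α - n + k) ≤ |D| := by
    have h5 : |G / Real.Gamma (α - n + k)| ≤ |D| + |R| := by
      calc |G / Real.Gamma (α - n + k)| = |D + (-R)| := by rw [hsplit]; ring_nf
        _ ≤ |D| + |R| := by simpa using abs_add_le D (-R)
    rw [abs_of_nonneg (by positivity)] at h5
    have : G / Real.Gamma (α - n + k) - (G/2) / Real.Gamma (α - n + k)
        = (G/2) / Real.Gamma (α - n + k) := by ring
    linarith [le_trans hRabs hsmall]
  have hbase : (0:ℝ) ≤ (ν + 1) * α + k := by
    have hk0 : (0:ℝ) ≤ k := Nat.cast_nonneg k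
    nlinarith
  have hnum : (0:ℝ) ≤ ((ν + 1) * α + k) ^ n := pow_nonneg hbase n
  have hDpos : 0 < |D| := lt_of_lt_of_le (div_pos (by linarith) hΓx) hDlb
  rw [show chi ν α n m k = ((ν + 1) * α + k) ^ n / D from rfl, abs_div, abs_of_nonneg hnum]
  calc ((ν + 1) * α + k) ^ n / |D| ≤ ((ν + 1) * α + k) ^ n / ((G / 2) / Real.Gamma (α - n + k)) :=
        div_le_div_of_nonneg_left hnum (div_pos (by linarith) hΓx) hDlb
    _ = (2 / G) * ((ν + 1) * α + k) ^ n * Real.Gamma (α - n + k) := by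
        field_simp

lemma summable_chi_series (ν : ℝ) (n m : ℕ) (α : ℝ) (hν : -1 < ν) (hn : 0 < n) (hm : 0 < m)
    (hα : (m : ℝ) + n < α) (S : ℝ) (hS0 : 0 ≤ S) (hS1 : S < 1) :
    Summable (fun k : ℕ => |chi ν α n m k| * S ^ k / k !) := by
  have hαpos : (0:ℝ) < α := lt_trans (by positivity) hα
  set S' : ℝ := max S (1/2) with hS'
  have hS'0 : (0:ℝ) < S' := lt_of_lt_of_le (by norm_num) (le_max_right _ _)
  have hS'1 : S' < 1 := max_lt hS1 (by norm_num)
  have hSS' : S ≤ S' := le_max_left _ _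
  obtain ⟨K, hK⟩ := chi_bound ν n m α hν hn hm hα
  set G := Real.Gamma (α - m - n) with hG
  have hGpos : 0 < G := Real.Gamma_pos_of_pos (by linarith)
  set v : ℕ → ℝ := fun k => (2 / G) * ((ν + 1) * α + k) ^ n * Real.Gamma (α - n + k) * S' ^ k / k !
    with hv
  have hb : ∀ k : ℕ, (0:ℝ) < (ν + 1) * α + k := by
    intro k
    have hk0 : (0:ℝ) ≤ k := Nat.cast_nonneg k
    nlinarith
  have hxk : ∀ k : ℕ, (1:ℝ) < α - n + k := by
    intro k
    have : (1:ℝ) ≤ m := by exact_mod_cast hm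
    have hk0 : (0:ℝ) ≤ k := Nat.cast_nonneg k
    linarith
  have hΓx : ∀ k : ℕ, 0 < Real.Gamma (α - n + k) := fun k =>
    Real.Gamma_pos_of_pos (by linarith [hxk k])
  have hvpos : ∀ k, 0 < v k := by
    intro k
    have h1 : (0:ℝ) < (k ! : ℝ) := by positivity
    have := hb k
    have := hΓx k
    have h2 : (0:ℝ) < ((ν + 1) * α + k) ^ n := pow_pos (hb k) n
    rw [hv]
    have h3 : (0:ℝ) < S' ^ k := pow_pos hS'0 k
    positivity
  set r : ℝ := (1 + S') / 2 with hr
  have hr1 : r < 1 := by rw [hr]; linarith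
  have hS'r : S' < r := by rw [hr]; linarith
  have hρ : Tendsto (fun k : ℕ =>
      (((ν + 1) * α + (k+1:ℕ)) / ((ν + 1) * α + k)) ^ n * ((α - n + k) / (k+1)) * S')
      atTop (𝓝 S') := by
    have t1 : Tendsto (fun k : ℕ => ((ν + 1) * α + (k+1:ℕ)) / ((ν + 1) * α + k)) atTop (𝓝 1) := by
      have ha : Tendsto (fun k : ℕ => (ν + 1) * α + (k:ℝ)) atTop atTop :=
        tendsto_atTop_add_const_left _ _ tendsto_natCast_atTop_atTop
      have hinv : Tendsto (fun k : ℕ => ((ν + 1) * α + (k:ℝ))⁻¹) atTop (𝓝 0) :=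
        tendsto_inv_atTop_zero.comp ha
      have := hinv.const_add (1:ℝ)
      rw [add_zero] at this
      refine this.congr fun k => ?_
      have h0 := (hb k).ne'
      field_simp
      push_cast
      ring
    have t2 : Tendsto (fun k : ℕ => (α - n + k) / ((k:ℝ)+1)) atTop (𝓝 1) := by
      have ha : Tendsto (fun k : ℕ => ((k:ℝ)+1)) atTop atTop :=
        tendsto_atTop_add_const_right _ _ tendsto_natCast_atTop_atTop
      have hinv : Tendsto (fun k : ℕ => ((k:ℝ)+1)⁻¹) atTop (𝓝 0) :=
        tendsto_inv_atTop_zero.comp ha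
      have := (hinv.const_mul (α - n - 1)).const_add (1:ℝ)
      rw [mul_zero, add_zero] at this
      refine this.congr fun k => ?_
      have h0 : ((k:ℝ)+1) ≠ 0 := by positivity
      field_simp
      ring
    have := ((t1.pow n).mul t2).mul_const S'
    rw [one_pow, one_mul, one_mul] at this
    exact this
  have hev : ∀ᶠ k : ℕ in atTop,
      (((ν + 1) * α + (k+1:ℕ)) / ((ν + 1) * α + k)) ^ n * ((α - n + k) / (k+1)) * S' < r :=
    hρ.eventually_lt_const hS'r
  have hvsum : Summable v := by
    refine summable_of_ratio_norm_eventually_le hr1 ?_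
    filter_upwards [hev] with k hk2
    rw [Real.norm_eq_abs, Real.norm_eq_abs, abs_of_pos (hvpos (k+1)), abs_of_pos (hvpos k)]
    have key : v (k+1) = ((((ν + 1) * α + (k+1:ℕ)) / ((ν + 1) * α + k)) ^ n
        * ((α - n + k) / (k+1)) * S') * v k := by
      simp only [hv]
      have hΓsucc : Real.Gamma (α - n + (k+1:ℕ)) = (α - n + k) * Real.Gamma (α - n + k) := by
        have : α - ↑n + ((k:ℝ)+1) = (α - n + k) + 1 := by ring
        push_cast
        rw [this, Real.Gamma_add_one (by linarith [hxk k])]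
      have hfac : ((k+1)! : ℝ) = ((k:ℝ)+1) * k ! := by
        push_cast [Nat.factorial_succ]
        ring
      have h0 := (hb k).ne'
      have h1 := (hΓx k).ne'
      have h2 : ((k:ℝ)+1) ≠ 0 := by positivity
      have h3 : (k ! : ℝ) ≠ 0 := by positivity
      rw [hΓsucc, hfac]
      push_cast
      rw [div_pow]
      field_simp
      ring
    rw [key]
    have := mul_le_mul_of_nonneg_right hk2.le (hvpos k).le
    linarith
  rw [← summable_nat_add_iff K]
  refine Summable.of_nonneg_of_le (fun k => ?_) (fun k => ?_)
    ((summable_nat_add_iff K).mpr hvsum)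
  · positivity
  · have hKk : k + K ≥ K := Nat.le_add_left K k
    have hchi := hK (k + K) hKk
    have h1 : (0:ℝ) < (((k+K)! : ℕ) : ℝ) := by positivity
    have hSk : S ^ (k+K) ≤ S' ^ (k+K) := pow_le_pow_left₀ hS0 hSS' _
    have h2 : |chi ν α n m (k+K)| * S ^ (k+K)
        ≤ 2 / G * ((ν + 1) * α + ((k+K : ℕ) : ℝ)) ^ n * Real.Gamma (α - n + ((k+K : ℕ) : ℝ))
          * S' ^ (k+K) := by
      refine mul_le_mul hchi hSk (pow_nonneg hS0 _) ?_
      exact mul_nonneg (mul_nonneg (by positivity) (pow_nonneg (hb _).le n)) (hΓx _).le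
    simp only [hv]
    exact (div_le_div_iff_of_pos_right h1).mpr h2

lemma summable_pq {n m : ℕ} (t : Fin n → ℝ) (ht : ∀ i, 0 ≤ t i)
    (s : Fin m → ℝ) (hs : ∀ j, 0 ≤ s j) (c : ℕ → ℝ) (hc0 : ∀ k, 0 ≤ c k)
    (a b : ℝ) (ha : 0 ≤ a) (hb : 0 ≤ b)
    (hcs : Summable (fun k => c k *
      (∑ j, Real.exp (b * ∑ i, t i) * s j) ^ k / k !)) :
    Summable (fun pq : (Fin n → ℕ) × (Fin m → ℕ) =>
      (∏ i, ((a + b * (∑ j, pq.2 j)) * t i) ^ pq.1 i / (pq.1 i)!) *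
        (c (∑ j, pq.2 j) * ∏ j, s j ^ pq.2 j / (pq.2 j)!)) := by
  set T := ∑ i, t i with hT
  have hT0 : 0 ≤ T := Finset.sum_nonneg fun i _ => ht i
  set E := Real.exp (b * T) with hE
  set B := Real.exp (a * T) * ∑' k, c k * (∑ j, E * s j) ^ k / k ! with hB
  have hcoef : ∀ k : ℕ, (0:ℝ) ≤ a + b * k :=
    fun k => add_nonneg ha (mul_nonneg hb (Nat.cast_nonneg k))
  have hppart_nn : ∀ (k : ℕ) (p : Fin n → ℕ),
      (0:ℝ) ≤ ∏ i, ((a + b * k) * t i) ^ p i / (p i)! := fun k p =>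
    Finset.prod_nonneg fun i _ => div_nonneg (pow_nonneg (mul_nonneg (hcoef k) (ht i)) _)
      (by positivity)
  have hqpart_nn : ∀ q : Fin m → ℕ, (0:ℝ) ≤ c (∑ j, q j) * ∏ j, s j ^ q j / (q j)! := by
    intro q
    exact mul_nonneg (hc0 _) (Finset.prod_nonneg fun j _ =>
      div_nonneg (pow_nonneg (hs j) _) (by positivity))
  have hnn : ∀ pq : (Fin n → ℕ) × (Fin m → ℕ),
      (0:ℝ) ≤ (∏ i, ((a + b * (∑ j, pq.2 j)) * t i) ^ pq.1 i / (pq.1 i)!) *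
        (c (∑ j, pq.2 j) * ∏ j, s j ^ pq.2 j / (pq.2 j)!) :=
    fun pq => mul_nonneg (hppart_nn _ _) (hqpart_nn _)
  refine summable_of_sum_le (c := B) hnn (fun u => ?_)
  set N : ℕ := u.sup (fun pq => (Finset.univ.sup pq.1) + (∑ j, pq.2 j)) with hN
  set P : Finset (Fin n → ℕ) := Fintype.piFinset (fun _ : Fin n => Finset.range (N+1)) with hP
  set Q : Finset (Fin m → ℕ) := (Finset.range (N+1)).biUnion
    (fun k => piAntidiag (univ : Finset (Fin m)) k) with hQ
  have hsub : u ⊆ P ×ˢ Q := by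
    intro pq hpq
    rw [Finset.mem_product]
    constructor
    · rw [hP, Fintype.mem_piFinset]
      intro i
      rw [Finset.mem_range]
      have h1 : pq.1 i ≤ Finset.univ.sup pq.1 := Finset.le_sup (Finset.mem_univ i)
      have h2 : (Finset.univ.sup pq.1) + (∑ j, pq.2 j) ≤ N :=
        Finset.le_sup (f := fun pq : (Fin n → ℕ) × (Fin m → ℕ) =>
          (Finset.univ.sup pq.1) + (∑ j, pq.2 j)) hpq
      omega
    · rw [hQ, Finset.mem_biUnion]
      refine ⟨∑ j, pq.2 j, Finset.mem_range.mpr ?_, Finset.mem_piAntidiag.mpr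
        ⟨rfl, fun i _ => Finset.mem_univ i⟩⟩
      have h2 : (Finset.univ.sup pq.1) + (∑ j, pq.2 j) ≤ N :=
        Finset.le_sup (f := fun pq : (Fin n → ℕ) × (Fin m → ℕ) =>
          (Finset.univ.sup pq.1) + (∑ j, pq.2 j)) hpq
      omega
  calc ∑ pq ∈ u, (∏ i, ((a + b * (∑ j, pq.2 j)) * t i) ^ pq.1 i / (pq.1 i)!) *
        (c (∑ j, pq.2 j) * ∏ j, s j ^ pq.2 j / (pq.2 j)!)
      ≤ ∑ pq ∈ P ×ˢ Q, (∏ i, ((a + b * (∑ j, pq.2 j)) * t i) ^ pq.1 i / (pq.1 i)!) *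
        (c (∑ j, pq.2 j) * ∏ j, s j ^ pq.2 j / (pq.2 j)!) :=
        Finset.sum_le_sum_of_subset_of_nonneg hsub (fun pq _ _ => hnn pq)
    _ = ∑ q ∈ Q, ∑ p ∈ P, (∏ i, ((a + b * (∑ j, q j)) * t i) ^ p i / (p i)!) *
        (c (∑ j, q j) * ∏ j, s j ^ q j / (q j)!) := by
        rw [Finset.sum_product_right]
    _ = ∑ q ∈ Q, (∑ p ∈ P, ∏ i, ((a + b * (∑ j, q j)) * t i) ^ p i / (p i)!) *
        (c (∑ j, q j) * ∏ j, s j ^ q j / (q j)!) := by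
        refine Finset.sum_congr rfl fun q _ => ?_
        rw [Finset.sum_mul]
    _ ≤ ∑ q ∈ Q, Real.exp ((a + b * (∑ j, q j)) * T) *
        (c (∑ j, q j) * ∏ j, s j ^ q j / (q j)!) := by
        refine Finset.sum_le_sum fun q _ => ?_
        refine mul_le_mul_of_nonneg_right ?_ (hqpart_nn q)
        rw [hP, ← Finset.prod_univ_sum (fun _ : Fin n => Finset.range (N+1))
          (fun i j => ((a + b * (∑ j, q j)) * t i) ^ j / (j)!)]
        have hexp : Real.exp ((a + b * (∑ j, q j)) * T)
            = ∏ i, Real.exp ((a + b * (∑ j, q j)) * t i) := by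
          rw [← Real.exp_sum, ← Finset.mul_sum, hT]
        rw [hexp]
        refine Finset.prod_le_prod (fun i _ => ?_) (fun i _ => ?_)
        · exact Finset.sum_nonneg fun j _ => div_nonneg
            (pow_nonneg (mul_nonneg (hcoef _) (ht i)) _) (by positivity)
        · exact Real.sum_le_exp_of_nonneg (mul_nonneg (hcoef _) (ht i)) _
    _ = Real.exp (a * T) * ∑ q ∈ Q, c (∑ j, q j) * ∏ j, (E * s j) ^ q j / (q j)! := by
        rw [Finset.mul_sum]
        refine Finset.sum_congr rfl fun q _ => ?_
        have h1 : Real.exp ((a + b * (∑ j, q j)) * T)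
            = Real.exp (a * T) * E ^ (∑ j, q j) := by
          rw [hE, ← Real.exp_nat_mul, ← Real.exp_add]
          congr 1
          push_cast
          ring
        rw [h1]
        have h2 : E ^ (∑ j, q j) * ∏ j, s j ^ q j / (q j)!
            = ∏ j, (E * s j) ^ q j / (q j)! := by
          rw [← Finset.prod_pow_eq_pow_sum]
          rw [← Finset.prod_mul_distrib]
          refine Finset.prod_congr rfl fun j _ => ?_
          rw [mul_pow, mul_div_assoc]
        rw [← h2]
        ring
    _ ≤ B := by
        rw [hB]
        refine mul_le_mul_of_nonneg_left ?_ (Real.exp_nonneg _)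
        exact sum_fibers_le c hc0 (fun j => E * s j)
          (fun j => mul_nonneg (Real.exp_nonneg _) (hs j)) hcs _

end FBH

section Main
open Nat Filter Topology

/-- The diagonal of the Bergman kernel of the weighted Hilbert space `H_α` on the
Fock-Bargmann-Hartogs domain `D_{n,m}(μ)`: the two series converge and
`∑_{p,q} (μ((ν+1)α+|q|))^{|p|} χ(α,|q|) / (∏Γ(pᵢ+1)∏Γ(qⱼ+1)) |z|^{2p}|w|^{2q}
  = (α-m-n)_{m+n} e^{μ(ν+1)α‖z‖²} ∑_q ψ(α,|q|) Γ(|q|+α)/(Γ(α)∏Γ(qᵢ+1)) |w̃|^{2q}`. -/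
theorem stmt1 (μ ν : ℝ) (hμ : 0 < μ) (hν : -1 < ν) (n m : ℕ) (hn : 0 < n) (hm : 0 < m)
    (α : ℝ) (hα : (m : ℝ) + n < α) :
    ∀ z : EuclideanSpace ℂ (Fin n), ∀ w : EuclideanSpace ℂ (Fin m),
      ‖w‖ ^ 2 < Real.exp (-μ * ‖z‖ ^ 2) →
      Summable (fun pq : (Fin n → ℕ) × (Fin m → ℕ) =>
        (μ * ((ν + 1) * α + (∑ j, pq.2 j))) ^ (∑ i, pq.1 i) * chi ν α n m (∑ j, pq.2 j) /
          ((∏ i, Real.Gamma ((pq.1 i : ℝ) + 1)) * ∏ j, Real.Gamma ((pq.2 j : ℝ) + 1)) *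
          (∏ i, ‖z i‖ ^ (2 * pq.1 i)) * ∏ j, ‖w j‖ ^ (2 * pq.2 j)) ∧
      Summable (fun q : Fin m → ℕ =>
        psi ν α n m (∑ i, q i) * Real.Gamma ((∑ i, q i : ℕ) + α) /
          (Real.Gamma α * ∏ i, Real.Gamma ((q i : ℝ) + 1)) *
          ∏ i, ‖(Real.exp (μ * ‖z‖ ^ 2 / 2) • w) i‖ ^ (2 * q i)) ∧
      (∑' pq : (Fin n → ℕ) × (Fin m → ℕ),
        (μ * ((ν + 1) * α + (∑ j, pq.2 j))) ^ (∑ i, pq.1 i) * chi ν α n m (∑ j, pq.2 j) /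
          ((∏ i, Real.Gamma ((pq.1 i : ℝ) + 1)) * ∏ j, Real.Gamma ((pq.2 j : ℝ) + 1)) *
          (∏ i, ‖z i‖ ^ (2 * pq.1 i)) * ∏ j, ‖w j‖ ^ (2 * pq.2 j))
      = poch (α - m - n) (m + n) * Real.exp (μ * (ν + 1) * α * ‖z‖ ^ 2) *
        ∑' q : Fin m → ℕ,
          psi ν α n m (∑ i, q i) * Real.Gamma ((∑ i, q i : ℕ) + α) /
            (Real.Gamma α * ∏ i, Real.Gamma ((q i : ℝ) + 1)) *
            ∏ i, ‖(Real.exp (μ * ‖z‖ ^ 2 / 2) • w) i‖ ^ (2 * q i) := by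
  intro z w hw
  have hαpos : (0:ℝ) < α := lt_trans (by positivity) hα
  have hβ : (0:ℝ) < (ν + 1) * α := by nlinarith
  have ha0 : (0:ℝ) ≤ μ * ((ν + 1) * α) := mul_nonneg hμ.le hβ.le
  have hz2 : ‖z‖ ^ 2 = ∑ i, ‖z i‖ ^ 2 := by
    rw [EuclideanSpace.norm_eq, Real.sq_sqrt (Finset.sum_nonneg fun i _ => sq_nonneg _)]
  have hw2 : ‖w‖ ^ 2 = ∑ j, ‖w j‖ ^ 2 := by
    rw [EuclideanSpace.norm_eq, Real.sq_sqrt (Finset.sum_nonneg fun i _ => sq_nonneg _)]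
  have hs'0 : ∀ j, (0:ℝ) ≤ ‖w j‖ ^ 2 := fun j => sq_nonneg _
  have ht0 : ∀ i, (0:ℝ) ≤ ‖z i‖ ^ 2 := fun i => sq_nonneg _
  have hS0 : (0:ℝ) ≤ ∑ j, Real.exp (μ * (∑ i, ‖z i‖ ^ 2)) * ‖w j‖ ^ 2 :=
    Finset.sum_nonneg fun j _ => mul_nonneg (Real.exp_nonneg _) (hs'0 j)
  have hS1 : (∑ j, Real.exp (μ * (∑ i, ‖z i‖ ^ 2)) * ‖w j‖ ^ 2) < 1 := by
    have h1 : ∑ j, Real.exp (μ * (∑ i, ‖z i‖ ^ 2)) * ‖w j‖ ^ 2 = Real.exp (μ * (∑ i, ‖z i‖ ^ 2)) * ‖w‖ ^ 2 := by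
      rw [← Finset.mul_sum, ← hw2]
    rw [h1]
    calc Real.exp (μ * (∑ i, ‖z i‖ ^ 2)) * ‖w‖ ^ 2 < Real.exp (μ * (∑ i, ‖z i‖ ^ 2)) * Real.exp (-μ * ‖z‖ ^ 2) :=
          mul_lt_mul_of_pos_left hw (Real.exp_pos _)
      _ = 1 := by
          rw [← Real.exp_add, ← hz2]
          rw [show μ * ‖z‖ ^ 2 + -μ * ‖z‖ ^ 2 = 0 by ring, Real.exp_zero]
  have hcs : Summable (fun k => |chi ν α n m k| *
      (∑ j, Real.exp (μ * (∑ i, ‖z i‖ ^ 2)) * ‖w j‖ ^ 2) ^ k / k !) :=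
    summable_chi_series ν n m α hν hn hm hα _ hS0 hS1
  have SG : Summable (fun pq : (Fin n → ℕ) × (Fin m → ℕ) => (∏ i, (((μ * ((ν + 1) * α)) + μ * (((∑ j, pq.2 j) : ℕ) : ℝ)) * ‖z i‖ ^ 2) ^ pq.1 i / (pq.1 i)!) * (|chi ν α n m (∑ j, pq.2 j)| * ∏ j, (‖w j‖ ^ 2) ^ pq.2 j / (pq.2 j)!)) :=
    summable_pq (fun i => ‖z i‖ ^ 2) ht0 (fun j => ‖w j‖ ^ 2) hs'0
      (fun k => |chi ν α n m k|) (fun k => abs_nonneg _) (μ * ((ν + 1) * α)) μ ha0 hμ.le hcs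
  have hppart_nn : ∀ pq : (Fin n → ℕ) × (Fin m → ℕ),
      (0:ℝ) ≤ ∏ i, (((μ * ((ν + 1) * α)) + μ * (((∑ j, pq.2 j) : ℕ) : ℝ)) * ‖z i‖ ^ 2) ^ pq.1 i / (pq.1 i)! :=
    fun pq => Finset.prod_nonneg fun i _ => div_nonneg
      (pow_nonneg (mul_nonneg (add_nonneg ha0 (mul_nonneg hμ.le (Nat.cast_nonneg _))) (ht0 i)) _)
      (by positivity)
  have hqpart_nn : ∀ pq : (Fin n → ℕ) × (Fin m → ℕ),
      (0:ℝ) ≤ ∏ j, (‖w j‖ ^ 2) ^ pq.2 j / (pq.2 j)! :=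
    fun pq => Finset.prod_nonneg fun j _ => div_nonneg (pow_nonneg (hs'0 j) _) (by positivity)
  have hFabs : ∀ pq : (Fin n → ℕ) × (Fin m → ℕ), |(∏ i, (((μ * ((ν + 1) * α)) + μ * (((∑ j, pq.2 j) : ℕ) : ℝ)) * ‖z i‖ ^ 2) ^ pq.1 i / (pq.1 i)!) * (chi ν α n m (∑ j, pq.2 j) * ∏ j, (‖w j‖ ^ 2) ^ pq.2 j / (pq.2 j)!)| = (∏ i, (((μ * ((ν + 1) * α)) + μ * (((∑ j, pq.2 j) : ℕ) : ℝ)) * ‖z i‖ ^ 2) ^ pq.1 i / (pq.1 i)!) * (|chi ν α n m (∑ j, pq.2 j)| * ∏ j, (‖w j‖ ^ 2) ^ pq.2 j / (pq.2 j)!) := by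
    intro pq
    rw [abs_mul, abs_mul, abs_of_nonneg (hppart_nn pq), abs_of_nonneg (hqpart_nn pq)]
  have SF : Summable (fun pq : (Fin n → ℕ) × (Fin m → ℕ) => (∏ i, (((μ * ((ν + 1) * α)) + μ * (((∑ j, pq.2 j) : ℕ) : ℝ)) * ‖z i‖ ^ 2) ^ pq.1 i / (pq.1 i)!) * (chi ν α n m (∑ j, pq.2 j) * ∏ j, (‖w j‖ ^ 2) ^ pq.2 j / (pq.2 j)!)) :=
    summable_abs_iff.mp (SG.congr (fun pq => (hFabs pq).symm))
  have hfact_ne : ∀ (N : ℕ) (p : Fin N → ℕ), (∏ i, ((p i)! : ℝ)) ≠ 0 := by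
    intro N p
    refine (Finset.prod_pos fun i _ => ?_).ne'
    exact_mod_cast Nat.factorial_pos (p i)
  have hpointA : ∀ pq : (Fin n → ℕ) × (Fin m → ℕ),
      (μ * ((ν + 1) * α + (∑ j, pq.2 j))) ^ (∑ i, pq.1 i) * chi ν α n m (∑ j, pq.2 j) /
        ((∏ i, Real.Gamma ((pq.1 i : ℝ) + 1)) * ∏ j, Real.Gamma ((pq.2 j : ℝ) + 1)) *
        (∏ i, ‖z i‖ ^ (2 * pq.1 i)) * ∏ j, ‖w j‖ ^ (2 * pq.2 j)
      = (∏ i, (((μ * ((ν + 1) * α)) + μ * (((∑ j, pq.2 j) : ℕ) : ℝ)) * ‖z i‖ ^ 2) ^ pq.1 i / (pq.1 i)!) * (chi ν α n m (∑ j, pq.2 j) * ∏ j, (‖w j‖ ^ 2) ^ pq.2 j / (pq.2 j)!) := by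
    intro pq
    simp only [Real.Gamma_nat_eq_factorial, pow_mul]
    rw [show μ * ((ν + 1) * α + (((∑ j, pq.2 j) : ℕ) : ℝ))
        = (μ * ((ν + 1) * α)) + μ * (((∑ j, pq.2 j) : ℕ) : ℝ) by ring]
    simp only [mul_pow, Finset.prod_div_distrib, Finset.prod_mul_distrib,
      Finset.prod_pow_eq_pow_sum]
    have h1 := hfact_ne n pq.1
    have h2 := hfact_ne m pq.2
    field_simp
  refine ⟨SF.congr (fun pq => (hpointA pq).symm), ?_⟩
  have SQabs : Summable (fun q : Fin m → ℕ => |chi ν α n m (∑ j, q j)| * ∏ j, (Real.exp (μ * (∑ i, ‖z i‖ ^ 2)) * ‖w j‖ ^ 2) ^ q j / (q j)!) :=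
    summable_q_of_chi (fun k => |chi ν α n m k|) (fun k => abs_nonneg _)
      (fun j => Real.exp (μ * (∑ i, ‖z i‖ ^ 2)) * ‖w j‖ ^ 2)
      (fun j => mul_nonneg (Real.exp_nonneg _) (hs'0 j)) hcs
  have hprodE_nn : ∀ q : Fin m → ℕ,
      (0:ℝ) ≤ ∏ j, (Real.exp (μ * (∑ i, ‖z i‖ ^ 2)) * ‖w j‖ ^ 2) ^ q j / (q j)! :=
    fun q => Finset.prod_nonneg fun j _ => div_nonneg
      (pow_nonneg (mul_nonneg (Real.exp_nonneg _) (hs'0 j)) _) (by positivity)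
  have SQ : Summable (fun q : Fin m → ℕ => chi ν α n m (∑ j, q j) * ∏ j, (Real.exp (μ * (∑ i, ‖z i‖ ^ 2)) * ‖w j‖ ^ 2) ^ q j / (q j)!) := by
    refine summable_abs_iff.mp (SQabs.congr (fun q => ?_))
    rw [abs_mul, abs_of_nonneg (hprodE_nn q)]
  have hΓα : Real.Gamma α ≠ 0 := (Real.Gamma_pos_of_pos hαpos).ne'
  have hΓmn : (0:ℝ) < Real.Gamma (α - m - n) := Real.Gamma_pos_of_pos (by linarith)
  have habsw : ∀ (q : Fin m → ℕ) (i : Fin m),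
      ‖(Real.exp (μ * ‖z‖ ^ 2 / 2) • w) i‖ ^ (2 * q i)
        = (Real.exp (μ * (∑ i, ‖z i‖ ^ 2)) * ‖w i‖ ^ 2) ^ q i := by
    intro q i
    have h1 : ‖(Real.exp (μ * ‖z‖ ^ 2 / 2) • w) i‖
        = Real.exp (μ * ‖z‖ ^ 2 / 2) * ‖w i‖ := by
      have : (Real.exp (μ * ‖z‖ ^ 2 / 2) • w) i
          = (Real.exp (μ * ‖z‖ ^ 2 / 2) : ℂ) * w i := by
        simp [Complex.real_smul]
      rw [this, norm_mul, Complex.norm_real, Real.norm_eq_abs, abs_of_pos (Real.exp_pos _)]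
    rw [pow_mul, h1, mul_pow, ← Real.exp_nat_mul]
    norm_num
    rw [show (2:ℝ) * (μ * ‖z‖ ^ 2 / 2) = μ * ‖z‖ ^ 2 by ring, hz2]
  have hpointB : ∀ q : Fin m → ℕ,
      psi ν α n m (∑ i, q i) * Real.Gamma ((∑ i, q i : ℕ) + α) /
        (Real.Gamma α * ∏ i, Real.Gamma ((q i : ℝ) + 1)) *
        ∏ i, ‖(Real.exp (μ * ‖z‖ ^ 2 / 2) • w) i‖ ^ (2 * q i)
      = (Real.Gamma (α - m - n) / Real.Gamma α) *
        (chi ν α n m (∑ i, q i) * ∏ i, (Real.exp (μ * (∑ i, ‖z i‖ ^ 2)) * ‖w i‖ ^ 2) ^ q i / (q i)!) := by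
    intro q
    have hΓαk : Real.Gamma (α + ((∑ i, q i : ℕ) : ℝ)) ≠ 0 := by
      refine (Real.Gamma_pos_of_pos ?_).ne'
      have : (0:ℝ) ≤ ((∑ i, q i : ℕ) : ℝ) := Nat.cast_nonneg _
      linarith
    rw [Finset.prod_congr rfl (fun i _ => habsw q i)]
    rw [psi, show ((∑ i, q i : ℕ) : ℝ) + α = α + ((∑ i, q i : ℕ) : ℝ) from add_comm _ _]
    simp only [Real.Gamma_nat_eq_factorial, Finset.prod_div_distrib]
    have h2 := hfact_ne m q
    field_simp
  refine ⟨(SQ.mul_left (Real.Gamma (α - m - n) / Real.Gamma α)).congr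
    (fun q => (hpointB q).symm), ?_⟩
  have hpoch : poch (α - m - n) (m + n) * Real.Gamma (α - m - n) = Real.Gamma α := by
    have h1 := gamma_shift (α - m - n) (by linarith) (m + n)
    rw [show α - ↑m - ↑n + ((m + n : ℕ) : ℝ) = α by push_cast; ring] at h1
    rw [h1, poch]
    ring
  have hpc : poch (α - ↑m - ↑n) (m + n) * (Real.Gamma (α - ↑m - ↑n) / Real.Gamma α) = 1 := by
    rw [← mul_div_assoc, hpoch, div_self hΓα]
  have hinner : ∀ q : Fin m → ℕ,
      HasSum (fun p : Fin n → ℕ => (∏ i, (((μ * ((ν + 1) * α)) + μ * (((∑ j, q j) : ℕ) : ℝ)) * ‖z i‖ ^ 2) ^ p i / (p i)!) * (chi ν α n m (∑ j, q j) * ∏ j, (‖w j‖ ^ 2) ^ q j / (q j)!))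
        (Real.exp ((μ * ((ν + 1) * α)) * (∑ i, ‖z i‖ ^ 2)) * (chi ν α n m (∑ j, q j) * ∏ j, (Real.exp (μ * (∑ i, ‖z i‖ ^ 2)) * ‖w j‖ ^ 2) ^ q j / (q j)!)) := by
    intro q
    have hc0 : ∀ i, (0:ℝ) ≤ ((μ * ((ν + 1) * α)) + μ * (((∑ j, q j) : ℕ) : ℝ)) * ‖z i‖ ^ 2 :=
      fun i => mul_nonneg (add_nonneg ha0 (mul_nonneg hμ.le (Nat.cast_nonneg _))) (ht0 i)
    have h1 := (hasSum_exp_pi n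
      (fun i => ((μ * ((ν + 1) * α)) + μ * (((∑ j, q j) : ℕ) : ℝ)) * ‖z i‖ ^ 2) hc0).mul_right
      (chi ν α n m (∑ j, q j) * ∏ j, (‖w j‖ ^ 2) ^ q j / (q j)!)
    have hval : Real.exp (∑ i, ((μ * ((ν + 1) * α)) + μ * (((∑ j, q j) : ℕ) : ℝ)) * ‖z i‖ ^ 2) *
        (chi ν α n m (∑ j, q j) * ∏ j, (‖w j‖ ^ 2) ^ q j / (q j)!)
        = Real.exp ((μ * ((ν + 1) * α)) * (∑ i, ‖z i‖ ^ 2)) * (chi ν α n m (∑ j, q j) * ∏ j, (Real.exp (μ * (∑ i, ‖z i‖ ^ 2)) * ‖w j‖ ^ 2) ^ q j / (q j)!) := by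
      rw [← Finset.mul_sum]
      have hE1 : Real.exp (((μ * ((ν + 1) * α)) + μ * (((∑ j, q j) : ℕ) : ℝ)) * (∑ i, ‖z i‖ ^ 2))
          = Real.exp ((μ * ((ν + 1) * α)) * (∑ i, ‖z i‖ ^ 2)) * (Real.exp (μ * (∑ i, ‖z i‖ ^ 2))) ^ (∑ j, q j) := by
        rw [← Real.exp_nat_mul, ← Real.exp_add]
        congr 1
        push_cast
        ring
      rw [hE1]
      have h2 : (Real.exp (μ * (∑ i, ‖z i‖ ^ 2))) ^ (∑ j, q j) * ∏ j, (‖w j‖ ^ 2) ^ q j / (q j)!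
          = ∏ j, (Real.exp (μ * (∑ i, ‖z i‖ ^ 2)) * ‖w j‖ ^ 2) ^ q j / (q j)! := by
        rw [← Finset.prod_pow_eq_pow_sum, ← Finset.prod_mul_distrib]
        refine Finset.prod_congr rfl fun j _ => ?_
        rw [mul_pow, mul_div_assoc]
      rw [← h2]
      ring
    rwa [hval] at h1
  calc (∑' pq : (Fin n → ℕ) × (Fin m → ℕ),
        (μ * ((ν + 1) * α + (∑ j, pq.2 j))) ^ (∑ i, pq.1 i) * chi ν α n m (∑ j, pq.2 j) /
          ((∏ i, Real.Gamma ((pq.1 i : ℝ) + 1)) * ∏ j, Real.Gamma ((pq.2 j : ℝ) + 1)) *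
          (∏ i, ‖z i‖ ^ (2 * pq.1 i)) * ∏ j, ‖w j‖ ^ (2 * pq.2 j))
      = ∑' pq : (Fin n → ℕ) × (Fin m → ℕ), (∏ i, (((μ * ((ν + 1) * α)) + μ * (((∑ j, pq.2 j) : ℕ) : ℝ)) * ‖z i‖ ^ 2) ^ pq.1 i / (pq.1 i)!) * (chi ν α n m (∑ j, pq.2 j) * ∏ j, (‖w j‖ ^ 2) ^ pq.2 j / (pq.2 j)!) := tsum_congr hpointA
    _ = ∑' x : (Fin m → ℕ) × (Fin n → ℕ), (∏ i, (((μ * ((ν + 1) * α)) + μ * (((∑ j, x.1 j) : ℕ) : ℝ)) * ‖z i‖ ^ 2) ^ x.2 i / (x.2 i)!) * (chi ν α n m (∑ j, x.1 j) * ∏ j, (‖w j‖ ^ 2) ^ x.1 j / (x.1 j)!) :=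
        ((Equiv.prodComm ((Fin m → ℕ)) ((Fin n → ℕ))).tsum_eq
          (fun pq : (Fin n → ℕ) × (Fin m → ℕ) => (∏ i, (((μ * ((ν + 1) * α)) + μ * (((∑ j, pq.2 j) : ℕ) : ℝ)) * ‖z i‖ ^ 2) ^ pq.1 i / (pq.1 i)!) * (chi ν α n m (∑ j, pq.2 j) * ∏ j, (‖w j‖ ^ 2) ^ pq.2 j / (pq.2 j)!))).symm
    _ = ∑' (q : Fin m → ℕ) (p : Fin n → ℕ), (∏ i, (((μ * ((ν + 1) * α)) + μ * (((∑ j, q j) : ℕ) : ℝ)) * ‖z i‖ ^ 2) ^ p i / (p i)!) * (chi ν α n m (∑ j, q j) * ∏ j, (‖w j‖ ^ 2) ^ q j / (q j)!) :=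
        SF.prod_symm.tsum_prod
    _ = ∑' q : Fin m → ℕ, Real.exp ((μ * ((ν + 1) * α)) * (∑ i, ‖z i‖ ^ 2)) * (chi ν α n m (∑ j, q j) * ∏ j, (Real.exp (μ * (∑ i, ‖z i‖ ^ 2)) * ‖w j‖ ^ 2) ^ q j / (q j)!) := tsum_congr (fun q => (hinner q).tsum_eq)
    _ = Real.exp ((μ * ((ν + 1) * α)) * (∑ i, ‖z i‖ ^ 2)) * ∑' q : Fin m → ℕ, chi ν α n m (∑ j, q j) * ∏ j, (Real.exp (μ * (∑ i, ‖z i‖ ^ 2)) * ‖w j‖ ^ 2) ^ q j / (q j)! := tsum_mul_left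
    _ = poch (α - m - n) (m + n) * Real.exp (μ * (ν + 1) * α * ‖z‖ ^ 2) *
        ∑' q : Fin m → ℕ,
          psi ν α n m (∑ i, q i) * Real.Gamma ((∑ i, q i : ℕ) + α) /
            (Real.Gamma α * ∏ i, Real.Gamma ((q i : ℝ) + 1)) *
            ∏ i, ‖(Real.exp (μ * ‖z‖ ^ 2 / 2) • w) i‖ ^ (2 * q i) := by
        rw [tsum_congr hpointB, tsum_mul_left,
          show μ * (ν + 1) * α * ‖z‖ ^ 2 = (μ * ((ν + 1) * α)) * (∑ i, ‖z i‖ ^ 2) by rw [hz2]; ring]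
        linear_combination (-(Real.exp ((μ * ((ν + 1) * α)) * (∑ i, ‖z i‖ ^ 2)) *
          ∑' q : Fin m → ℕ, chi ν α n m (∑ j, q j) * ∏ j, (Real.exp (μ * (∑ i, ‖z i‖ ^ 2)) * ‖w j‖ ^ 2) ^ q j / (q j)!)) * hpc

end Main
end

section
/- Let μ > 0, let n, m be positive integers, and let a ∈ ℂ^n. Define φ_a : ℂ^n × ℂ^m → ℂ^n × ℂ^m by φ_a(z,w) := (z-a, exp(μ⟨z,a⟩ - μ‖a‖²/2)·w), where ⟨z,a⟩ := ∑_{j=1}^n z_j·conj(a_j). Then φ_a is holomorphic, maps D_{n,m}(μ) into D_{n,m}(μ), and φ_{-a} ∘ φ_a is the identity on ℂ^n × ℂ^m; consequently φ_a restricts to a biholomorphic automorphism of D_{n,m}(μ) with inverse φ_{-a}. -/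
open Finset

/-- The map `φ_a(z,w) = (z-a, e^{μ⟨z,a⟩-μ‖a‖²/2} w)` on `ℂⁿ × ℂᵐ`,
where `⟨z,a⟩ = ∑ⱼ zⱼ conj(aⱼ)`. -/
noncomputable def phiMap (μ : ℝ) (n m : ℕ) (a : EuclideanSpace ℂ (Fin n)) :
    EuclideanSpace ℂ (Fin n) × EuclideanSpace ℂ (Fin m) →
      EuclideanSpace ℂ (Fin n) × EuclideanSpace ℂ (Fin m) :=
  fun p => (p.1 - a,
    Complex.exp ((μ : ℂ) * (∑ j, p.1 j * (starRingEnd ℂ) (a j)) -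
      (μ : ℂ) * ((‖a‖ : ℂ)) ^ 2 / 2) • p.2)

lemma sum_mul_conj_eq_inner (n : ℕ) (a z : EuclideanSpace ℂ (Fin n)) :
    (∑ j, z j * (starRingEnd ℂ) (a j)) = (inner ℂ a z : ℂ) := by
  simp [PiLp.inner_apply, RCLike.inner_apply, mul_comm]

/-- `φ_a` is holomorphic, maps `D_{n,m}(μ)` into itself, and `φ_{-a} ∘ φ_a = id`;
hence `φ_a` restricts to an automorphism of the Fock-Bargmann-Hartogs domain. -/
theorem stmt5 (μ : ℝ) (hμ : 0 < μ) (n m : ℕ) (hn : 0 < n) (hm : 0 < m)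
    (a : EuclideanSpace ℂ (Fin n)) :
    Differentiable ℂ (phiMap μ n m a) ∧
    (∀ p : EuclideanSpace ℂ (Fin n) × EuclideanSpace ℂ (Fin m),
      ‖p.2‖ ^ 2 < Real.exp (-μ * ‖p.1‖ ^ 2) →
      ‖(phiMap μ n m a p).2‖ ^ 2 < Real.exp (-μ * ‖(phiMap μ n m a p).1‖ ^ 2)) ∧
    (∀ p : EuclideanSpace ℂ (Fin n) × EuclideanSpace ℂ (Fin m),
      phiMap μ n m (-a) (phiMap μ n m a p) = p) := by
  have hcoord : ∀ j : Fin n, Differentiable ℂ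
      (fun p : EuclideanSpace ℂ (Fin n) × EuclideanSpace ℂ (Fin m) => p.1 j) := by
    intro j
    exact (EuclideanSpace.proj (𝕜 := ℂ) j).differentiable.comp differentiable_fst
  have haa : (∑ j, a j * (starRingEnd ℂ) (a j)) = ((‖a‖ : ℂ)) ^ 2 := by
    rw [sum_mul_conj_eq_inner]
    exact_mod_cast inner_self_eq_norm_sq_to_K (𝕜 := ℂ) a
  refine ⟨?_, ?_, ?_⟩
  · apply Differentiable.prodMk
    · exact differentiable_fst.sub (differentiable_const a)
    · apply Differentiable.fun_smul _ differentiable_snd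
      apply Complex.differentiable_exp.comp
      apply Differentiable.sub _ (differentiable_const _)
      exact (differentiable_const _).mul (Differentiable.fun_sum fun j _ =>
        (hcoord j).mul (differentiable_const _))
  · rintro ⟨z, w⟩ h
    simp only [phiMap] at *
    set c : ℂ := (μ : ℂ) * (∑ j, z j * (starRingEnd ℂ) (a j)) -
      (μ : ℂ) * ((‖a‖ : ℂ)) ^ 2 / 2 with hc
    have hsm : ‖Complex.exp c • w‖ ^ 2 = Real.exp (2 * c.re) * ‖w‖ ^ 2 := by
      rw [norm_smul, mul_pow, Complex.norm_exp, ← Real.exp_nat_mul]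
      norm_num
    rw [hsm]
    have hre : c.re = μ * (inner ℂ a z : ℂ).re - μ * ‖a‖ ^ 2 / 2 := by
      rw [hc, sum_mul_conj_eq_inner]
      simp [Complex.sub_re, Complex.mul_re, Complex.div_re, ← Complex.ofReal_pow]
    have hnorm : ‖z - a‖ ^ 2 = ‖z‖ ^ 2 - 2 * (inner ℂ a z : ℂ).re + ‖a‖ ^ 2 := by
      have h1 := @norm_sub_sq ℂ _ _ _ _ z a
      have h2 : RCLike.re (inner ℂ z a : ℂ) = (inner ℂ a z : ℂ).re := by
        rw [← inner_conj_symm a z, Complex.conj_re]; rfl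
      rw [h1, h2]
    have key : Real.exp (2 * c.re) * Real.exp (-μ * ‖z‖ ^ 2)
        = Real.exp (-μ * ‖z - a‖ ^ 2) := by
      rw [← Real.exp_add, hre, hnorm]; ring_nf
    rw [← key]
    exact mul_lt_mul_of_pos_left h (Real.exp_pos _)
  · rintro ⟨z, w⟩
    simp only [phiMap, smul_smul, ← Complex.exp_add]
    have hs : (∑ j, (z - a) j * (starRingEnd ℂ) ((-a) j))
        = -(∑ j, z j * (starRingEnd ℂ) (a j)) + ((‖a‖ : ℂ)) ^ 2 := by
      have hterm : ∀ j, (z - a) j * (starRingEnd ℂ) ((-a) j)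
          = -(z j * (starRingEnd ℂ) (a j)) + a j * (starRingEnd ℂ) (a j) := by
        intro j
        show (z j - a j) * (starRingEnd ℂ) (-(a j)) = _
        rw [map_neg]; ring
      rw [Finset.sum_congr rfl (fun j _ => hterm j), Finset.sum_add_distrib,
        ← haa, Finset.sum_neg_distrib]
    have hexp : ((μ : ℂ) * (∑ j, (z - a) j * (starRingEnd ℂ) ((-a) j)) -
        (μ : ℂ) * ((‖(-a : EuclideanSpace ℂ (Fin n))‖ : ℂ)) ^ 2 / 2) +
        ((μ : ℂ) * (∑ j, z j * (starRingEnd ℂ) (a j)) -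
        (μ : ℂ) * ((‖a‖ : ℂ)) ^ 2 / 2) = 0 := by
      rw [hs, norm_neg]; ring
    rw [hexp, Complex.exp_zero, one_smul]
    refine Prod.ext ?_ rfl
    simp
end

section
/- Let m be a positive integer, let k ∈ ℕ, let α ∈ ℝ with α > m+k-1, and let q = (q_1,…,q_m) with each q_i a positive real number. Then the function x ↦ (1-∑_{i=1}^m x_i)^{α-m-k} · ∏_{i=1}^m x_i^{q_i} is Lebesgue integrable on the open simplex {x ∈ ℝ^m : x_i > 0 for all i, ∑_{i=1}^m x_i < 1}, and its integral equals ∏_{i=1}^m Γ(q_i+1) · Γ(α-m-k+1) / Γ(α+|q|-k+1), where |q| := ∑_{i=1}^m q_i. -/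
open Finset MeasureTheory Set
open scoped Pointwise

lemma betaAux {p r : ℝ} (hp : -1 < p) (hr : -1 < r) :
    IntegrableOn (fun t : ℝ => t ^ p * (1 - t) ^ r) (Set.Ioo (0:ℝ) 1) volume ∧
    ∫ t in Set.Ioo (0:ℝ) 1, t ^ p * (1 - t) ^ r
      = Real.Gamma (p + 1) * Real.Gamma (r + 1) / Real.Gamma (p + r + 2) := by
  have hu : (0:ℝ) < Complex.re ((p:ℂ) + 1) := by simp; linarith
  have hv : (0:ℝ) < Complex.re ((r:ℂ) + 1) := by simp; linarith
  have hconv := Complex.betaIntegral_convergent hu hv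
  simp only [add_sub_cancel_right] at hconv
  have heq : EqOn (fun t : ℝ => ((t ^ p * (1 - t) ^ r : ℝ) : ℂ))
      (fun t : ℝ => (t:ℂ) ^ (p:ℂ) * (1 - (t:ℂ)) ^ (r:ℂ)) (Set.Ioo (0:ℝ) 1) := by
    intro t ht
    simp only
    rw [Complex.ofReal_mul, Complex.ofReal_cpow ht.1.le, ← Complex.ofReal_one,
      ← Complex.ofReal_sub, Complex.ofReal_cpow (by linarith [ht.2] : (0:ℝ) ≤ 1 - t)]
  have hIoc : IntegrableOn (fun t : ℝ => (t:ℂ) ^ (p:ℂ) * (1 - (t:ℂ)) ^ (r:ℂ))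
      (Set.Ioc (0:ℝ) 1) volume := hconv.1
  have hInt : IntegrableOn (fun t : ℝ => ((t ^ p * (1 - t) ^ r : ℝ) : ℂ))
      (Set.Ioo (0:ℝ) 1) volume :=
    (hIoc.mono_set Set.Ioo_subset_Ioc_self).congr_fun heq.symm measurableSet_Ioo
  have hIntR : IntegrableOn (fun t : ℝ => t ^ p * (1 - t) ^ r) (Set.Ioo (0:ℝ) 1) volume := by
    have := hInt.re
    simpa [IntegrableOn] using this
  refine ⟨hIntR, ?_⟩
  have hβ := Complex.Gamma_mul_Gamma_eq_betaIntegral hu hv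
  have hΓne : Complex.Gamma ((p:ℂ) + 1 + ((r:ℂ) + 1)) ≠ 0 := by
    apply Complex.Gamma_ne_zero_of_re_pos
    simp; linarith
  have hbval : Complex.betaIntegral ((p:ℂ)+1) ((r:ℂ)+1)
      = Complex.Gamma ((p:ℂ)+1) * Complex.Gamma ((r:ℂ)+1)
        / Complex.Gamma ((p:ℂ) + 1 + ((r:ℂ) + 1)) := by
    field_simp [hΓne]; linear_combination hβ.symm
  have hbint : Complex.betaIntegral ((p:ℂ)+1) ((r:ℂ)+1)
      = ((∫ t in Set.Ioo (0:ℝ) 1, t ^ p * (1 - t) ^ r : ℝ) : ℂ) := by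
    rw [Complex.betaIntegral, intervalIntegral.integral_of_le zero_le_one]
    rw [MeasureTheory.integral_Ioc_eq_integral_Ioo]
    simp only [add_sub_cancel_right]
    exact (setIntegral_congr_fun measurableSet_Ioo heq).symm.trans integral_ofReal
  have := hbval.symm.trans hbint
  rw [show ((p:ℂ)+1) = ((p+1:ℝ):ℂ) by push_cast; ring,
    show ((r:ℂ)+1) = ((r+1:ℝ):ℂ) by push_cast; ring,
    show ((p+1:ℝ):ℂ) + ((r+1:ℝ):ℂ) = ((p+r+2:ℝ):ℂ) by push_cast; ring,
    Complex.Gamma_ofReal, Complex.Gamma_ofReal, Complex.Gamma_ofReal] at this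
  rw [← Complex.ofReal_mul, ← Complex.ofReal_div] at this
  exact_mod_cast this.symm

lemma dirichletAux : ∀ (m : ℕ) (a : ℝ), -1 < a → ∀ (q : Fin m → ℝ), (∀ i, -1 < q i) →
    IntegrableOn (fun x : Fin m → ℝ => (1 - ∑ i, x i) ^ a * ∏ i, (x i) ^ (q i))
      {x : Fin m → ℝ | (∀ i, 0 < x i) ∧ ∑ i, x i < 1} volume ∧
    ∫ x in {x : Fin m → ℝ | (∀ i, 0 < x i) ∧ ∑ i, x i < 1},
        (1 - ∑ i, x i) ^ a * ∏ i, (x i) ^ (q i)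
      = Real.Gamma (a + 1) * (∏ i, Real.Gamma (q i + 1)) /
          Real.Gamma (a + (∑ i, q i) + m + 1) := by
  intro m
  induction m with
  | zero =>
    intro a ha q hq
    have hset : {x : Fin 0 → ℝ | (∀ i, 0 < x i) ∧ ∑ i, x i < 1} = Set.univ := by
      ext x; simp
    have hfun : (fun x : Fin 0 → ℝ => (1 - ∑ i, x i) ^ a * ∏ i, (x i) ^ (q i))
        = fun _ => (1:ℝ) := by
      funext x; simp [Real.one_rpow]
    have hμ : (volume : Measure (Fin 0 → ℝ)) Set.univ = 1 := by
      rw [MeasureTheory.volume_pi, MeasureTheory.Measure.pi_univ]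
      simp
    rw [hset, hfun]
    constructor
    · rw [IntegrableOn]
      apply integrable_const
    · rw [MeasureTheory.setIntegral_const, MeasureTheory.measureReal_def, hμ]
      simp [div_self (Real.Gamma_pos_of_pos (show (0:ℝ) < a + 1 by linarith)).ne']
  | succ m ih =>
    intro a ha q hq
    have hq' : ∀ j : Fin m, -1 < q j.succ := fun j => hq _
    obtain ⟨ihInt, ihVal⟩ := ih a ha (fun j => q j.succ) hq'
    set S' : Set (Fin m → ℝ) := {y : Fin m → ℝ | (∀ i, 0 < y i) ∧ ∑ i, y i < 1} with hS'def
    have hS'meas : MeasurableSet S' := by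
      have h1 : MeasurableSet {y : Fin m → ℝ | ∀ i, 0 < y i} := by
        rw [Set.setOf_forall]
        exact MeasurableSet.iInter fun i =>
          measurableSet_lt measurable_const (measurable_pi_apply i)
      have h2 : MeasurableSet {y : Fin m → ℝ | ∑ i, y i < 1} :=
        measurableSet_lt (Finset.measurable_sum _ fun i _ => measurable_pi_apply i)
          measurable_const
      exact h1.inter h2
    set base : (Fin m → ℝ) → ℝ :=
      fun y => (1 - ∑ i, y i) ^ a * ∏ j, (y j) ^ (q j.succ) with hbase
    set I₀ : ℝ := ∫ y in S', base y with hI0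
    set Q : ℝ := ∑ j : Fin m, q j.succ with hQ
    set b : ℝ := a + Q + m with hb
    have hQm : -(m:ℝ) ≤ Q := by
      have h0 : (-(m:ℝ)) = ∑ _j : Fin m, (-1:ℝ) := by simp
      rw [hQ, h0]
      exact Finset.sum_le_sum fun j _ => (hq' j).le
    have hbpos : -1 < b := by rw [hb]; linarith
    have hΓb : Real.Gamma (b + 1) ≠ 0 :=
      (Real.Gamma_pos_of_pos (by linarith : (0:ℝ) < b + 1)).ne'
    -- product-space setup
    set e : (ℝ × (Fin m → ℝ)) ≃ᵐ (Fin (m+1) → ℝ) :=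
      (MeasurableEquiv.piFinSuccAbove (fun _ : Fin (m+1) => ℝ) 0).symm with he
    have hmp : MeasurePreserving e volume volume :=
      (volume_preserving_piFinSuccAbove (fun _ : Fin (m+1) => ℝ) 0).symm _
    have he_apply : ∀ p : ℝ × (Fin m → ℝ), e p = Fin.cons p.1 p.2 := by
      intro p
      rw [he]
      rw [MeasurableEquiv.piFinSuccAbove_symm_apply]
      exact Fin.insertNth_zero' p.1 p.2
    set F : ℝ × (Fin m → ℝ) → ℝ :=
      fun p => (1 - (p.1 + ∑ j, p.2 j)) ^ a * (p.1 ^ q 0 * ∏ j, (p.2 j) ^ (q j.succ))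
      with hF
    set T : Set (ℝ × (Fin m → ℝ)) :=
      {p : ℝ × (Fin m → ℝ) | (0 < p.1 ∧ ∀ j, 0 < p.2 j) ∧ p.1 + ∑ j, p.2 j < 1} with hT
    have hsnd : ∀ j : Fin m, Measurable fun p : ℝ × (Fin m → ℝ) => p.2 j :=
      fun j => (measurable_pi_apply j).comp measurable_snd
    have hTmeas : MeasurableSet T := by
      have h1 : MeasurableSet {p : ℝ × (Fin m → ℝ) | 0 < p.1} :=
        measurableSet_lt measurable_const measurable_fst
      have h2 : MeasurableSet {p : ℝ × (Fin m → ℝ) | ∀ j, 0 < p.2 j} := by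
        rw [Set.setOf_forall]
        exact MeasurableSet.iInter fun j =>
          measurableSet_lt measurable_const (hsnd j)
      have h3 : MeasurableSet {p : ℝ × (Fin m → ℝ) | p.1 + ∑ j, p.2 j < 1} :=
        measurableSet_lt (measurable_fst.add
          (Finset.measurable_sum _ fun j _ => hsnd j))
          measurable_const
      exact (h1.inter h2).inter h3
    have hFmeas : Measurable F := by
      have hsum : Measurable fun p : ℝ × (Fin m → ℝ) => p.1 + ∑ j, p.2 j :=
        measurable_fst.add (Finset.measurable_sum _ fun j _ => hsnd j)
      exact ((measurable_const.sub hsum).pow_const a).mul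
        ((measurable_fst.pow_const (q 0)).mul
          (Finset.measurable_prod _ fun j _ => (hsnd j).pow_const (q j.succ)))
    have hpre : e ⁻¹' {x : Fin (m+1) → ℝ | (∀ i, 0 < x i) ∧ ∑ i, x i < 1} = T := by
      ext p
      simp only [Set.mem_preimage, Set.mem_setOf_eq, he_apply p, hT]
      rw [Fin.forall_fin_succ, Fin.sum_univ_succ]
      simp [Fin.cons_zero, Fin.cons_succ]
    have hcomp : ∀ p : ℝ × (Fin m → ℝ),
        (1 - ∑ i, (e p) i) ^ a * ∏ i, ((e p) i) ^ (q i) = F p := by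
      intro p
      rw [he_apply p, Fin.sum_univ_succ, Fin.prod_univ_succ]
      simp only [Fin.cons_zero, Fin.cons_succ, hF]
    -- slices
    have hTslice : ∀ t : ℝ, (Prod.mk t) ⁻¹' T =
        (if t ∈ Set.Ioo (0:ℝ) 1 then ((1-t) • S' : Set (Fin m → ℝ))
          else (∅ : Set (Fin m → ℝ))) := by
      intro t
      by_cases ht : t ∈ Set.Ioo (0:ℝ) 1
      · rw [if_pos ht]
        have hc : (0:ℝ) < 1 - t := by linarith [ht.2]
        ext y
        rw [Set.mem_smul_set_iff_inv_smul_mem₀ hc.ne']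
        simp only [Set.mem_preimage, hT, Set.mem_setOf_eq, hS'def, Pi.smul_apply,
          smul_eq_mul, ← Finset.mul_sum]
        constructor
        · rintro ⟨⟨ht0, hy⟩, hsum⟩
          refine ⟨fun i => mul_pos (inv_pos.2 hc) (hy i), ?_⟩
          rw [inv_mul_eq_div, div_lt_one hc]; linarith
        · rintro ⟨hy, hsum⟩
          have hy' : ∀ i, 0 < y i := fun i => by
            have h := hy i
            have h2 : y i = (1-t) * ((1-t)⁻¹ * y i) := by field_simp
            rw [h2]; exact mul_pos hc h
          refine ⟨⟨ht.1, hy'⟩, ?_⟩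
          rw [inv_mul_eq_div, div_lt_one hc] at hsum; linarith
      · rw [if_neg ht]
        ext y
        simp only [Set.mem_preimage, hT, Set.mem_setOf_eq, Set.mem_empty_iff_false, iff_false]
        rintro ⟨⟨ht0, hy⟩, hsum⟩
        exact ht ⟨ht0, by
          have h0 : 0 ≤ ∑ j, y j := Finset.sum_nonneg fun j _ => (hy j).le
          linarith⟩
    have hGslice : ∀ t : ℝ, (fun y => T.indicator F (t, y))
        = Set.indicator ((Prod.mk t) ⁻¹' T) (fun y => F (t, y)) := by
      intro t; funext y
      by_cases h : (t, y) ∈ T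
      · rw [Set.indicator_of_mem h, Set.indicator_of_mem (by exact h)]
      · rw [Set.indicator_of_notMem h, Set.indicator_of_notMem (by exact h)]
    -- scaling identity
    have hFscale : ∀ t ∈ Set.Ioo (0:ℝ) 1, ∀ y ∈ S',
        F (t, (1-t) • y) = ((1-t) ^ (a + Q) * t ^ q 0) * base y := by
      intro t ht y hy
      have hc : (0:ℝ) < 1 - t := by linarith [ht.2]
      have hynn : ∀ i, (0:ℝ) ≤ y i := fun i => (hy.1 i).le
      have hsnn : (0:ℝ) ≤ 1 - ∑ i, y i := by linarith [hy.2]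
      simp only [hF, hbase, Pi.smul_apply, smul_eq_mul, ← Finset.mul_sum]
      rw [show 1 - (t + (1-t) * ∑ i, y i) = (1-t) * (1 - ∑ i, y i) by ring]
      rw [Real.mul_rpow hc.le hsnn]
      rw [Finset.prod_congr rfl (fun j _ => Real.mul_rpow hc.le (hynn j)),
        Finset.prod_mul_distrib, ← Real.rpow_sum_of_pos hc, ← hQ]
      rw [Real.rpow_add hc]
      ring
    have hbaseInd : Integrable (S'.indicator base) volume :=
      (integrable_indicator_iff hS'meas).2 ihInt
    have hfinrank : Module.finrank ℝ (Fin m → ℝ) = m := Module.finrank_fin_fun ℝ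
    -- inner integral for t ∈ Ioo 0 1
    have hinner : ∀ t ∈ Set.Ioo (0:ℝ) 1,
        Integrable (fun y => T.indicator F (t, y)) volume ∧
        ∫ y, T.indicator F (t, y) = t ^ q 0 * (1-t) ^ b * I₀ := by
      intro t ht
      have hc : (0:ℝ) < 1 - t := by linarith [ht.2]
      set g : (Fin m → ℝ) → ℝ := ((1-t) • S').indicator (fun z => F (t, z)) with hg
      have hgs : (fun y => T.indicator F (t, y)) = g := by
        rw [hGslice t, hTslice t, if_pos ht]
      have hcomp_ind : (fun y => g ((1-t) • y))
          = S'.indicator (fun y => F (t, (1-t) • y)) := by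
        funext y
        by_cases hyS : y ∈ S'
        · rw [Set.indicator_of_mem hyS, hg,
            Set.indicator_of_mem ((Set.smul_mem_smul_set_iff₀ hc.ne' S' y).2 hyS)]
        · rw [Set.indicator_of_notMem hyS, hg, Set.indicator_of_notMem
            (fun hmem => hyS ((Set.smul_mem_smul_set_iff₀ hc.ne' S' y).1 hmem))]
      have hind2 : S'.indicator (fun y => F (t, (1-t) • y))
          = fun y => ((1-t) ^ (a + Q) * t ^ q 0) * S'.indicator base y := by
        funext y
        by_cases hyS : y ∈ S'
        · rw [Set.indicator_of_mem hyS, Set.indicator_of_mem hyS, hFscale t ht y hyS]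
        · rw [Set.indicator_of_notMem hyS, Set.indicator_of_notMem hyS, mul_zero]
      have hgcint : Integrable (fun y => g ((1-t) • y)) volume := by
        rw [hcomp_ind, hind2]
        exact hbaseInd.const_mul _
      have hgint : Integrable g volume :=
        (integrable_comp_smul_iff volume g hc.ne').1 hgcint
      refine ⟨by rw [hgs]; exact hgint, ?_⟩
      have hval2 : ∫ y, g ((1-t) • y) = ((1-t) ^ (a + Q) * t ^ q 0) * I₀ := by
        rw [hcomp_ind, hind2, MeasureTheory.integral_const_mul,
          MeasureTheory.integral_indicator hS'meas, hI0]
      have hscal := MeasureTheory.Measure.integral_comp_smul_of_nonneg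
        (volume : Measure (Fin m → ℝ)) g (1-t) (hR := hc.le)
      rw [hfinrank] at hscal
      have h2 := hval2.symm.trans hscal
      have h3 : ∫ y, g y = (1-t)^(m:ℕ) * (((1-t) ^ (a + Q) * t ^ q 0) * I₀) := by
        rw [h2, smul_eq_mul, ← mul_assoc, mul_inv_cancel₀ (pow_ne_zero _ hc.ne'), one_mul]
      rw [hgs]
      rw [h3, ← Real.rpow_natCast (1-t) m, hb]
      rw [show (1-t:ℝ) ^ (a+Q) = (1-t) ^ a * (1-t) ^ Q from Real.rpow_add hc a Q,
        show (1-t:ℝ) ^ (a + Q + (m:ℝ)) = (1-t) ^ a * (1-t) ^ Q * (1-t) ^ ((m:ℕ):ℝ) from by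
          rw [← Real.rpow_add hc, ← Real.rpow_add hc]]
      ring
    set J : ℝ → ℝ := (Set.Ioo (0:ℝ) 1).indicator (fun t => t ^ q 0 * (1-t) ^ b * I₀) with hJ
    have hJeq : ∀ t : ℝ, ∫ y, T.indicator F (t, y) = J t := by
      intro t
      by_cases ht : t ∈ Set.Ioo (0:ℝ) 1
      · rw [(hinner t ht).2, hJ, Set.indicator_of_mem ht]
      · rw [hJ, Set.indicator_of_notMem ht]
        have hzero : (fun y => T.indicator F (t, y)) = 0 := by
          rw [hGslice t, hTslice t, if_neg ht]
          funext y; simp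
        rw [hzero]
        simp
    have hsliceint : ∀ t : ℝ, Integrable (fun y => T.indicator F (t, y)) volume := by
      intro t
      by_cases ht : t ∈ Set.Ioo (0:ℝ) 1
      · exact (hinner t ht).1
      · have hzero : (fun y => T.indicator F (t, y)) = 0 := by
          rw [hGslice t, hTslice t, if_neg ht]; funext y; simp
        rw [hzero]; exact integrable_zero _ _ _
    have hFnn : ∀ p, 0 ≤ T.indicator F p := by
      intro p
      apply Set.indicator_nonneg
      rintro x ⟨⟨hx1, hx2⟩, hx3⟩
      apply mul_nonneg (Real.rpow_nonneg (by linarith) a)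
      exact mul_nonneg (Real.rpow_nonneg hx1.le _)
        (Finset.prod_nonneg fun j _ => Real.rpow_nonneg (hx2 j).le _)
    have hJint : Integrable J volume := by
      rw [hJ]
      exact (integrable_indicator_iff measurableSet_Ioo).2
        (((betaAux (hq 0) hbpos).1).mul_const I₀)
    have hGmeasA : AEStronglyMeasurable (T.indicator F)
        ((volume : Measure ℝ).prod (volume : Measure (Fin m → ℝ))) :=
      (hFmeas.indicator hTmeas).aestronglyMeasurable
    have hGint : Integrable (T.indicator F) ((volume : Measure ℝ).prod volume) := by
      refine (integrable_prod_iff hGmeasA).2 ⟨ae_of_all _ hsliceint, ?_⟩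
      refine hJint.congr (ae_of_all _ fun t => ?_)
      exact (hJeq t).symm.trans
        (integral_congr_ae (ae_of_all _ fun y => (Real.norm_of_nonneg (hFnn _)).symm))
    have hTint : IntegrableOn F T ((volume : Measure ℝ).prod volume) :=
      (integrable_indicator_iff hTmeas).1 hGint
    have hTval : ∫ p in T, F p ∂((volume : Measure ℝ).prod volume)
        = (Real.Gamma (q 0 + 1) * Real.Gamma (b + 1) / Real.Gamma (q 0 + b + 2)) * I₀ := by
      rw [← MeasureTheory.integral_indicator hTmeas]
      rw [MeasureTheory.integral_prod _ hGint]
      rw [show (fun t => ∫ y, T.indicator F (t, y)) = J from funext hJeq]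
      rw [hJ, MeasureTheory.integral_indicator measurableSet_Ioo]
      rw [MeasureTheory.integral_mul_const]
      rw [(betaAux (hq 0) hbpos).2]
    have hprod : (volume : Measure (ℝ × (Fin m → ℝ))) = (volume : Measure ℝ).prod volume :=
      Measure.volume_eq_prod ℝ (Fin m → ℝ)
    constructor
    · refine (hmp.integrableOn_comp_preimage e.measurableEmbedding).1 ?_
      rw [hpre]
      have hfe : ((fun x : Fin (m+1) → ℝ => (1 - ∑ i, x i) ^ a * ∏ i, (x i) ^ (q i)) ∘ e)
          = F := funext fun p => hcomp p
      rw [hfe, hprod]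
      exact hTint
    · rw [← hmp.setIntegral_preimage_emb e.measurableEmbedding
        (fun x : Fin (m+1) → ℝ => (1 - ∑ i, x i) ^ a * ∏ i, (x i) ^ (q i)) _, hpre]
      have hcongr : ∫ p in T, (1 - ∑ i, (e p) i) ^ a * ∏ i, ((e p) i) ^ (q i) ∂volume
          = ∫ p in T, F p ∂volume :=
        integral_congr_ae (ae_of_all _ fun p => hcomp p)
      rw [hcongr, hprod, hTval, ihVal]
      rw [Fin.prod_univ_succ, Fin.sum_univ_succ]
      have hd : a + (q 0 + ∑ j : Fin m, q j.succ) + ((m+1 : ℕ) : ℝ) + 1 = q 0 + b + 2 := by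
        rw [hb, hQ]; push_cast; ring
      rw [hd]
      have hΓd : Real.Gamma (q 0 + b + 2) ≠ 0 :=
        (Real.Gamma_pos_of_pos (by linarith [hq 0] : (0:ℝ) < q 0 + b + 2)).ne'
      field_simp

/-- Dirichlet-type integral over the open simplex: for `α > m+k-1` and positive real
exponents `q_i`, the function `x ↦ (1-∑xᵢ)^{α-m-k} ∏ xᵢ^{qᵢ}` is integrable on the open
simplex and its integral equals `∏Γ(qᵢ+1)·Γ(α-m-k+1)/Γ(α+|q|-k+1)`. -/
theorem stmt8 (m : ℕ) (hm : 0 < m) (k : ℕ) (α : ℝ) (hα : (m : ℝ) + k - 1 < α)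
    (q : Fin m → ℝ) (hq : ∀ i, 0 < q i) :
    IntegrableOn
      (fun x : Fin m → ℝ => (1 - ∑ i, x i) ^ (α - m - k) * ∏ i, (x i) ^ (q i))
      {x : Fin m → ℝ | (∀ i, 0 < x i) ∧ ∑ i, x i < 1} volume ∧
    ∫ x in {x : Fin m → ℝ | (∀ i, 0 < x i) ∧ ∑ i, x i < 1},
        (1 - ∑ i, x i) ^ (α - m - k) * ∏ i, (x i) ^ (q i)
      = (∏ i, Real.Gamma (q i + 1)) * Real.Gamma (α - m - k + 1) /
          Real.Gamma (α + (∑ i, q i) - k + 1) := by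
  obtain ⟨h1, h2⟩ := dirichletAux m (α - m - k) (by linarith) q (fun i => by linarith [hq i])
  refine ⟨h1, ?_⟩
  rw [h2]
  rw [show α - ↑m - ↑k + (∑ i, q i) + ↑m + 1 = α + (∑ i, q i) - ↑k + 1 by ring]
  ring
end

section
/- Let m be a positive integer, let s > 0 be real, and let x = (x_1,…,x_m) ∈ ℝ^m with ‖x‖ < 1. Then the family ( Γ(|q|+s)/(Γ(s)·∏_{i=1}^m Γ(q_i+1)) · x^{2q} )_{q∈ℕ^m} is summable and ∑_{q∈ℕ^m} Γ(|q|+s)/(Γ(s)·∏_{i=1}^m Γ(q_i+1)) · x^{2q} = (1-‖x‖²)^{-s}. -/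
open Finset

open MeasureTheory Set

lemma aux_summable (s : ℝ) (hs : 0 < s) (t : ℝ) (ht0 : 0 ≤ t) (ht1 : t < 1) :
    Summable (fun n : ℕ => Real.Gamma ((n : ℝ) + s) * t ^ n / n.factorial) := by
  set r : ℝ := (1 + t) / 2 with hr
  have hrt : t < r := by rw [hr]; linarith
  have hr1 : r < 1 := by rw [hr]; linarith
  have hr0 : 0 < r := by rw [hr]; linarith
  apply summable_of_ratio_norm_eventually_le hr1
  have hN : ∀ᶠ n : ℕ in Filter.atTop, t * ((n : ℝ) + s) ≤ r * ((n : ℝ) + 1) := by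
    obtain ⟨N, hN⟩ := exists_nat_gt ((t * s) / (r - t))
    filter_upwards [Filter.eventually_ge_atTop N] with n hn
    have h1 : (t * s) / (r - t) < (n : ℝ) := lt_of_lt_of_le hN (by exact_mod_cast hn)
    have h2 : t * s < n * (r - t) := by
      rw [div_lt_iff₀ (by linarith)] at h1; linarith
    nlinarith [hr0]
  filter_upwards [hN] with n hn
  have hg : 0 < Real.Gamma ((n : ℝ) + s) := Real.Gamma_pos_of_pos (by positivity)
  have hfac : (0 : ℝ) < n.factorial := by exact_mod_cast n.factorial_pos
  have hfn : 0 ≤ Real.Gamma ((n : ℝ) + s) * t ^ n / n.factorial := by positivity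
  have e1 : Real.Gamma (((n + 1 : ℕ) : ℝ) + s) = ((n : ℝ) + s) * Real.Gamma ((n : ℝ) + s) := by
    have h : (((n + 1 : ℕ) : ℝ) + s) = ((n : ℝ) + s) + 1 := by push_cast; ring
    rw [h, Real.Gamma_add_one (by positivity)]
  have hg1 : 0 ≤ Real.Gamma (((n + 1 : ℕ) : ℝ) + s) := by rw [e1]; positivity
  rw [Real.norm_eq_abs, Real.norm_eq_abs, abs_of_nonneg (by positivity),
    abs_of_nonneg hfn]
  have hfn1 : Real.Gamma (((n + 1 : ℕ) : ℝ) + s) * t ^ (n + 1) / (n + 1).factorial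
      = t * ((n : ℝ) + s) * (Real.Gamma ((n : ℝ) + s) * t ^ n / n.factorial) / ((n : ℝ) + 1) := by
    rw [e1, Nat.factorial_succ, pow_succ]
    push_cast
    field_simp
  rw [hfn1, div_le_iff₀ (by positivity : (0 : ℝ) < (n : ℝ) + 1)]
  calc t * ((n : ℝ) + s) * (Real.Gamma ((n : ℝ) + s) * t ^ n / n.factorial)
      ≤ r * ((n : ℝ) + 1) * (Real.Gamma ((n : ℝ) + s) * t ^ n / n.factorial) :=
        mul_le_mul_of_nonneg_right hn hfn
    _ = r * (Real.Gamma ((n : ℝ) + s) * t ^ n / n.factorial) * ((n : ℝ) + 1) := by ring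

lemma aux_hasSum (s : ℝ) (hs : 0 < s) (t : ℝ) (ht0 : 0 ≤ t) (ht1 : t < 1) :
    HasSum (fun n : ℕ => Real.Gamma ((n : ℝ) + s) / (Real.Gamma s * n.factorial) * t ^ n)
      ((1 - t) ^ (-s)) := by
  have hΓs : 0 < Real.Gamma s := Real.Gamma_pos_of_pos hs
  have h1t : (0 : ℝ) < 1 - t := by linarith
  set F : ℕ → ℝ → ℝ := fun n u => t ^ n / n.factorial * (Real.exp (-u) * u ^ ((n : ℝ) + s - 1))
    with hF
  have hpos : ∀ n : ℕ, (0:ℝ) < (n : ℝ) + s := fun n => by positivity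
  have hF_int : ∀ n : ℕ, IntegrableOn (F n) (Ioi 0) := fun n =>
    (Real.GammaIntegral_convergent (hpos n)).const_mul _
  have hF_val : ∀ n : ℕ, ∫ u in Ioi 0, F n u = t ^ n / n.factorial * Real.Gamma ((n : ℝ) + s) := by
    intro n
    rw [hF]
    simp only
    rw [MeasureTheory.integral_const_mul, ← Real.Gamma_eq_integral (hpos n)]
  have hF_nonneg : ∀ n : ℕ, ∀ u ∈ Ioi (0:ℝ), 0 ≤ F n u := by
    intro n u hu
    have hu0 : (0:ℝ) < u := hu
    have h1 : (0:ℝ) ≤ u ^ ((n : ℝ) + s - 1) := Real.rpow_nonneg hu0.le _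
    have h2 : (0:ℝ) < (n.factorial : ℝ) := by exact_mod_cast n.factorial_pos
    positivity
  have hF_norm : ∀ n : ℕ, ∫ u in Ioi 0, ‖F n u‖ = t ^ n / n.factorial * Real.Gamma ((n : ℝ) + s) := by
    intro n
    rw [← hF_val n]
    refine setIntegral_congr_fun measurableSet_Ioi fun u hu => ?_
    rw [Real.norm_eq_abs, abs_of_nonneg (hF_nonneg n u hu)]
  have hsum : Summable fun n : ℕ => ∫ u in Ioi 0, ‖F n u‖ := by
    simp_rw [hF_norm]
    refine (aux_summable s hs t ht0 ht1).congr fun n => ?_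
    have h2 : ((n.factorial : ℝ)) ≠ 0 := by positivity
    field_simp
  have hkey := MeasureTheory.hasSum_integral_of_summable_integral_norm hF_int hsum
  have htsum : ∫ u in Ioi 0, (∑' n, F n u) = (1 / (1 - t)) ^ s * Real.Gamma s := by
    rw [← Real.integral_rpow_mul_exp_neg_mul_Ioi hs h1t]
    refine setIntegral_congr_fun measurableSet_Ioi fun u hu => ?_
    have hu0 : (0:ℝ) < u := hu
    have hexp : HasSum (fun n : ℕ => (t * u) ^ n / n.factorial) (Real.exp (t * u)) := by
      rw [Real.exp_eq_exp_ℝ]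
      exact NormedSpace.expSeries_div_hasSum_exp (t * u)
    calc ∑' n, F n u
        = ∑' n : ℕ, (Real.exp (-u) * u ^ (s - 1)) * ((t * u) ^ n / n.factorial) := by
          refine tsum_congr fun n => ?_
          rw [hF]
          simp only
          rw [show ((n : ℝ) + s - 1) = (n : ℝ) + (s - 1) by ring,
            Real.rpow_add hu0, Real.rpow_natCast, mul_pow]
          ring
      _ = (Real.exp (-u) * u ^ (s - 1)) * Real.exp (t * u) := (hexp.mul_left _).tsum_eq
      _ = u ^ (s - 1) * Real.exp (-((1 - t) * u)) := by
          rw [mul_comm (Real.exp (-u)), mul_assoc, ← Real.exp_add,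
            show -u + t * u = -((1 - t) * u) by ring]
  rw [htsum] at hkey
  have hkey2 : HasSum (fun n : ℕ => t ^ n / n.factorial * Real.Gamma ((n : ℝ) + s))
      ((1 / (1 - t)) ^ s * Real.Gamma s) := by
    exact hkey.congr_fun fun n => (hF_val n).symm
  have hfun : (fun n : ℕ => Real.Gamma ((n : ℝ) + s) / (Real.Gamma s * n.factorial) * t ^ n)
      = fun n : ℕ => t ^ n / n.factorial * Real.Gamma ((n : ℝ) + s) / Real.Gamma s := by
    funext n
    have h2 : ((n.factorial : ℝ)) ≠ 0 := by positivity
    field_simp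
  have hval : ((1 : ℝ) - t) ^ (-s) = (1 / (1 - t)) ^ s * Real.Gamma s / Real.Gamma s := by
    rw [mul_div_assoc, div_self hΓs.ne', mul_one, one_div, Real.inv_rpow h1t.le,
      ← Real.rpow_neg h1t.le]
  rw [hfun, hval]
  exact hkey2.div_const _

/-- D'Angelo's identity: for `s > 0` and `‖x‖ < 1`,
`∑_{q∈ℕᵐ} Γ(|q|+s)/(Γ(s)∏Γ(qᵢ+1)) x^{2q} = (1-‖x‖²)^{-s}`, the family being summable. -/
theorem stmt10 (m : ℕ) (hm : 0 < m) (s : ℝ) (hs : 0 < s)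
    (x : EuclideanSpace ℝ (Fin m)) (hx : ‖x‖ < 1) :
    Summable (fun q : Fin m → ℕ =>
      Real.Gamma ((∑ i, q i : ℕ) + s) / (Real.Gamma s * ∏ i, Real.Gamma ((q i : ℝ) + 1)) *
        ∏ i, x i ^ (2 * q i)) ∧
    (∑' q : Fin m → ℕ,
      Real.Gamma ((∑ i, q i : ℕ) + s) / (Real.Gamma s * ∏ i, Real.Gamma ((q i : ℝ) + 1)) *
        ∏ i, x i ^ (2 * q i))
      = (1 - ‖x‖ ^ 2) ^ (-s) := by
  classical
  have hΓs : 0 < Real.Gamma s := Real.Gamma_pos_of_pos hs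
  set g : (Fin m → ℕ) → ℝ := fun q =>
    Real.Gamma ((∑ i, q i : ℕ) + s) / (Real.Gamma s * ∏ i, Real.Gamma ((q i : ℝ) + 1)) *
      ∏ i, x i ^ (2 * q i) with hgdef
  have hnorm : ‖x‖ ^ 2 = ∑ i, x i ^ 2 := by
    rw [EuclideanSpace.norm_eq, Real.sq_sqrt (by positivity)]
    exact Finset.sum_congr rfl fun i _ => by rw [Real.norm_eq_abs, sq_abs]
  have hT0 : (0 : ℝ) ≤ ∑ i, x i ^ 2 := by positivity
  have hT1 : (∑ i, x i ^ 2) < 1 := by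
    rw [← hnorm]
    exact pow_lt_one₀ (norm_nonneg x) hx two_ne_zero
  have hgfact : ∀ q : Fin m → ℕ, g q =
      Real.Gamma ((∑ i, q i : ℕ) + s) / (Real.Gamma s * ∏ i, ((q i).factorial : ℝ)) *
        ∏ i, (x i ^ 2) ^ (q i) := by
    intro q
    rw [hgdef]
    simp only [Real.Gamma_nat_eq_factorial, pow_mul]
  have hg0 : ∀ q : Fin m → ℕ, 0 ≤ g q := by
    intro q
    rw [hgfact q]
    have h1 : 0 < Real.Gamma (((∑ i, q i : ℕ) : ℝ) + s) :=
      Real.Gamma_pos_of_pos (add_pos_of_nonneg_of_pos (Nat.cast_nonneg _) hs)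
    have h2 : (0 : ℝ) < ∏ i, ((q i).factorial : ℝ) := by
      apply Finset.prod_pos
      intro i _
      exact_mod_cast (q i).factorial_pos
    have h3 : (0 : ℝ) ≤ ∏ i, (x i ^ 2) ^ (q i) := by positivity
    exact mul_nonneg (div_nonneg h1.le (by positivity)) h3
  haveI instF : ∀ n : ℕ, Fintype {q : Fin m → ℕ // (∑ i, q i) = n} := fun n =>
    Fintype.ofFinset (Finset.piAntidiag Finset.univ n)
      (fun q => by simp [Finset.mem_piAntidiag]; exact Iff.rfl)
  have hfiber : ∀ n : ℕ, ∑ q ∈ Finset.piAntidiag (Finset.univ : Finset (Fin m)) n, g q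
      = Real.Gamma ((n : ℝ) + s) / (Real.Gamma s * n.factorial) * (∑ i, x i ^ 2) ^ n := by
    intro n
    rw [Finset.sum_pow_eq_sum_piAntidiag Finset.univ (fun i => x i ^ 2) n, Finset.mul_sum]
    refine Finset.sum_congr rfl fun q hq => ?_
    rw [Finset.mem_piAntidiag] at hq
    obtain ⟨hq1, -⟩ := hq
    rw [hgfact q, hq1]
    have hms := Nat.multinomial_spec (Finset.univ : Finset (Fin m)) q
    rw [hq1] at hms
    have hcast : (∏ i, ((q i).factorial : ℝ)) * (Nat.multinomial Finset.univ q : ℝ)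
        = (n.factorial : ℝ) := by exact_mod_cast congrArg (Nat.cast : ℕ → ℝ) hms
    have h2 : (0 : ℝ) < ∏ i, ((q i).factorial : ℝ) := by
      apply Finset.prod_pos
      intro i _
      exact_mod_cast (q i).factorial_pos
    have h3 : (0 : ℝ) < (n.factorial : ℝ) := by exact_mod_cast n.factorial_pos
    have h4 : (0 : ℝ) < (Nat.multinomial Finset.univ q : ℝ) := by
      exact_mod_cast Nat.multinomial_pos _ _
    rw [← hcast, div_mul_eq_mul_div, div_mul_eq_mul_div,
      div_eq_div_iff (mul_pos hΓs h2).ne' (mul_pos hΓs (mul_pos h2 h4)).ne']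
    ring
  have hfib_sum : ∀ n : ℕ, ∑' (y : {q : Fin m → ℕ // (∑ i, q i) = n}), g ↑y
      = Real.Gamma ((n : ℝ) + s) / (Real.Gamma s * n.factorial) * (∑ i, x i ^ 2) ^ n := by
    intro n
    rw [tsum_fintype, ← hfiber n]
    exact (Finset.sum_subtype _ (fun q => by simp [Finset.mem_piAntidiag]) g).symm
  have hA := aux_hasSum s hs (∑ i, x i ^ 2) hT0 hT1
  set e := Equiv.sigmaFiberEquiv (fun q : Fin m → ℕ => ∑ i, q i) with he
  have hcomp : ∀ p : Σ n : ℕ, {q : Fin m → ℕ // (∑ i, q i) = n}, g (e p) = g ↑p.2 := by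
    rintro ⟨n, y⟩; rfl
  have hsig : Summable fun p : Σ n : ℕ, {q : Fin m → ℕ // (∑ i, q i) = n} => g (e p) := by
    rw [summable_sigma_of_nonneg (fun p => hg0 _)]
    constructor
    · intro n
      exact (hasSum_fintype _).summable
    · refine hA.summable.congr fun n => ?_
      exact (hfib_sum n).symm
  have hSummable : Summable g := by
    have := (Equiv.summable_iff e (f := g)).mp hsig
    exact this
  refine ⟨hSummable, ?_⟩
  have htsum : ∑' q, g q = (1 - ∑ i, x i ^ 2) ^ (-s) := by
    rw [← Equiv.tsum_eq e g]
    rw [hsig.tsum_sigma' (fun n => (hasSum_fintype _).summable)]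
    rw [← hA.tsum_eq]
    exact tsum_congr fun n => hfib_sum n
  rw [htsum, hnorm]
end

section
/- Let n, m be positive integers and ν ∈ ℝ. The identity ((ν+1)x + y)^n = ∑_{d=0}^n C(n,d) · ν^{n-d} · (x-m-n)_{n-d} · (x-d+y)_d holds for all real x and y if and only if n = 1 and ν = -1/(m+1). -/
open Finset

lemma poch_zero (k : ℕ) (hk : 0 < k) : poch 0 k = 0 :=
  Finset.prod_eq_zero (Finset.mem_range.2 hk) (by simp)

lemma poch_neg_one (k : ℕ) (hk : 2 ≤ k) : poch (-1) k = 0 :=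
  Finset.prod_eq_zero (Finset.mem_range.2 hk) (by norm_num)

/-- The identity `((ν+1)x+y)ⁿ = ∑_{d=0}^{n} C(n,d) ν^{n-d} (x-m-n)_{n-d} (x-d+y)_d`
holds for all real `x`, `y` iff `n = 1` and `ν = -1/(m+1)`. -/
theorem stmt12 (n m : ℕ) (hn : 0 < n) (hm : 0 < m) (ν : ℝ) :
    (∀ x y : ℝ,
      ((ν + 1) * x + y) ^ n =
        ∑ d ∈ Finset.range (n + 1),
          (n.choose d : ℝ) * ν ^ (n - d) * poch (x - m - n) (n - d) * poch (x - d + y) d)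
    ↔ (n = 1 ∧ ν = -1 / ((m : ℝ) + 1)) := by
  constructor
  · intro h
    have key : ∀ y : ℝ, poch ((m : ℝ) + n - n + y) n = 0 →
        ((ν + 1) * ((m : ℝ) + n) + y) ^ n = 0 := by
      intro y hy
      rw [h ((m : ℝ) + n) y]
      apply Finset.sum_eq_zero
      intro d hd
      by_cases hdn : d = n
      · subst hdn
        rw [hy, mul_zero]
      · have hd' : d < n := lt_of_le_of_ne (Nat.lt_succ_iff.mp (Finset.mem_range.mp hd)) hdn
        have h0 : ((m : ℝ) + n) - m - n = 0 := by ring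
        rw [h0, poch_zero _ (Nat.sub_pos_of_lt hd')]
        ring
    have e1 : (ν + 1) * ((m : ℝ) + n) - m = 0 := by
      have h0 : (m : ℝ) + n - n + (-(m : ℝ)) = 0 := by ring
      have := key (-(m : ℝ)) (by rw [h0]; exact poch_zero n hn)
      have := pow_eq_zero_iff hn.ne' |>.mp this
      linarith
    have hn1 : n = 1 := by
      by_contra hne
      have hn2 : 2 ≤ n := by omega
      have h0 : (m : ℝ) + n - n + (-((m : ℝ) + 1)) = -1 := by ring
      have e2 := key (-((m : ℝ) + 1)) (by rw [h0]; exact poch_neg_one n hn2)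
      have := pow_eq_zero_iff hn.ne' |>.mp e2
      linarith
    refine ⟨hn1, ?_⟩
    subst hn1
    have hm1 : (m : ℝ) + 1 ≠ 0 := by positivity
    push_cast at e1
    field_simp
    linear_combination e1
  · rintro ⟨rfl, rfl⟩
    intro x y
    have hm1 : (m : ℝ) + 1 ≠ 0 := by positivity
    simp [poch, Finset.sum_range_succ]
    field_simp
    ring
end

section
/- Let n, m be positive integers and c ∈ ℝ. If (x+c)^n = ∏_{j=1}^n (x-m-j) for all real x, then n = 1 and c = -(m+1). -/
open Finset

/-- If `(x+c)ⁿ = ∏_{j=1}^{n} (x-m-j)` for all real `x`, then `n = 1` and `c = -(m+1)`. -/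
theorem stmt14 (n m : ℕ) (hn : 0 < n) (hm : 0 < m) (c : ℝ)
    (h : ∀ x : ℝ, (x + c) ^ n = ∏ j ∈ Finset.range n, (x - m - (j + 1))) :
    n = 1 ∧ c = -((m : ℝ) + 1) := by
  have h1 := h ((m : ℝ) + 1)
  have hz : (∏ j ∈ Finset.range n, (((m : ℝ) + 1) - m - (j + 1))) = 0 := by
    apply Finset.prod_eq_zero (Finset.mem_range.mpr hn)
    push_cast
    ring
  rw [hz] at h1
  have hc : c = -((m : ℝ) + 1) := by
    have := pow_eq_zero_iff hn.ne' |>.mp h1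
    linarith
  refine ⟨?_, hc⟩
  by_contra hne
  have hn2 : 2 ≤ n := by omega
  have h2 := h ((m : ℝ) + 2)
  have hz2 : (∏ j ∈ Finset.range n, (((m : ℝ) + 2) - m - (j + 1))) = 0 := by
    apply Finset.prod_eq_zero (Finset.mem_range.mpr (by omega : 1 < n))
    push_cast
    ring
  rw [hz2, hc] at h2
  have : ((1 : ℝ)) ^ n = 0 := by
    convert h2 using 2
    ring
  simp at this
end

section
/- Let m be a positive integer, let α > 0 be real, and let c : ℕ → ℝ be a bounded sequence. Then the function on the open unit ball of ℂ^m given by w ↦ (1-‖w‖²)^α · ∑_{q∈ℕ^m} c(|q|) · Γ(|q|+α)/(Γ(α)·∏_{i=1}^m Γ(q_i+1)) · |w|^{2q} is constant if and only if the sequence c is constant. -/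
open Filter Topology
open scoped NNReal ENNReal


noncomputable def binCoef (β : ℝ) (k : ℕ) : ℝ :=
  Real.Gamma (k + β) / (Real.Gamma β * Nat.factorial k)

lemma binCoef_pos {β : ℝ} (hβ : 0 < β) (k : ℕ) : 0 < binCoef β k := by
  have h1 : (0:ℝ) < k + β := by positivity
  exact div_pos (Real.Gamma_pos_of_pos h1)
    (mul_pos (Real.Gamma_pos_of_pos hβ) (by exact_mod_cast k.factorial_pos))

lemma binCoef_zero {β : ℝ} (hβ : 0 < β) : binCoef β 0 = 1 := by
  have := (Real.Gamma_pos_of_pos hβ).ne'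
  simp [binCoef, this]

lemma binCoef_succ {β : ℝ} (hβ : 0 < β) (k : ℕ) :
    binCoef β (k + 1) = binCoef β k * ((k + β) / (k + 1)) := by
  have h1 : (0:ℝ) < k + β := by positivity
  have h2 : Real.Gamma ((k+1 : ℕ) + β) = (k + β) * Real.Gamma (k + β) := by
    rw [show ((k+1:ℕ):ℝ) + β = (k + β) + 1 by push_cast; ring, Real.Gamma_add_one h1.ne']
  have h3 : ((k+1).factorial : ℝ) = (k+1) * k.factorial := by
    rw [Nat.factorial_succ]; push_cast; ring
  have hΓβ := (Real.Gamma_pos_of_pos hβ).ne'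
  have hfk : (k.factorial : ℝ) ≠ 0 := by exact_mod_cast k.factorial_pos.ne'
  rw [binCoef, binCoef, h2, h3]
  field_simp

lemma tendsto_ratio (β : ℝ) : Tendsto (fun k : ℕ => ((k:ℝ) + β) / ((k:ℝ) + 1)) atTop (𝓝 1) := by
  have h : ∀ k : ℕ, ((k:ℝ) + β) / ((k:ℝ) + 1) = 1 + (β - 1) * (1 / ((k:ℝ) + 1)) := by
    intro k
    have : ((k:ℝ) + 1) ≠ 0 := by positivity
    field_simp
    ring
  simp_rw [h]
  have := tendsto_one_div_add_atTop_nhds_zero_nat (𝕜 := ℝ)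
  simpa using (tendsto_const_nhds (x := (1:ℝ))).add ((tendsto_const_nhds (x := β - 1)).mul this)

lemma summable_binCoef {β : ℝ} (hβ : 0 < β) {x : ℝ} (hx : |x| < 1) :
    Summable (fun k => binCoef β k * x ^ k) := by
  rcases eq_or_ne x 0 with rfl | hx0
  · apply summable_of_ne_finset_zero (s := {0})
    intro k hk
    simp [zero_pow (by simpa using hk)]
  · apply summable_of_ratio_test_tendsto_lt_one hx
      (Eventually.of_forall fun k =>
        mul_ne_zero (binCoef_pos hβ k).ne' (pow_ne_zero _ hx0))
    have heq : ∀ k : ℕ, ‖binCoef β (k+1) * x ^ (k+1)‖ / ‖binCoef β k * x ^ k‖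
        = (((k:ℝ) + β) / ((k:ℝ) + 1)) * |x| := by
      intro k
      rw [binCoef_succ hβ, pow_succ]
      have h1 : (0:ℝ) < binCoef β k := binCoef_pos hβ k
      have h2 : (0:ℝ) < ((k:ℝ) + β) / ((k:ℝ) + 1) := by positivity
      have hxk : |x| ^ k ≠ 0 := pow_ne_zero _ (by simpa using hx0)
      simp only [Real.norm_eq_abs, abs_mul, abs_pow, abs_of_pos h1, abs_of_pos h2]
      field_simp
    simp_rw [heq]
    simpa using (tendsto_ratio β).mul (tendsto_const_nhds (x := |x|))

lemma tendsto_ratio' (β : ℝ) : Tendsto (fun k : ℕ => ((k:ℝ) + β) / (k:ℝ)) atTop (𝓝 1) := by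
  have h : ∀ᶠ k : ℕ in atTop, ((k:ℝ) + β) / (k:ℝ) = 1 + β * (1 / (k:ℝ)) := by
    filter_upwards [eventually_ge_atTop 1] with k hk
    have : ((k:ℝ)) ≠ 0 := by positivity
    field_simp
  apply Tendsto.congr' (h.mono fun k hk => hk.symm)
  simpa using (tendsto_const_nhds (x := (1:ℝ))).add
    ((tendsto_const_nhds (x := β)).mul tendsto_one_div_atTop_nhds_zero_nat)

lemma summable_nat_mul_binCoef {β : ℝ} (hβ : 0 < β) {x : ℝ} (hx : |x| < 1) :
    Summable (fun k : ℕ => (k:ℝ) * binCoef β k * x ^ k) := by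
  rcases eq_or_ne x 0 with rfl | hx0
  · apply summable_of_ne_finset_zero (s := {0})
    intro k hk
    simp [zero_pow (by simpa using hk)]
  · apply summable_of_ratio_test_tendsto_lt_one hx
      (eventually_atTop.2 ⟨1, fun k hk => ?_⟩)
    · have : ∀ᶠ k : ℕ in atTop,
          ‖((k+1:ℕ):ℝ) * binCoef β (k+1) * x ^ (k+1)‖ / ‖(k:ℝ) * binCoef β k * x ^ k‖
          = (((k:ℝ) + β) / (k:ℝ)) * |x| := by
        filter_upwards [eventually_ge_atTop 1] with k hk
        rw [binCoef_succ hβ, pow_succ]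
        have h1 : (0:ℝ) < binCoef β k := binCoef_pos hβ k
        have h2 : (0:ℝ) < ((k:ℝ) + β) / ((k:ℝ) + 1) := by positivity
        have hk0 : ((k:ℝ)) ≠ 0 := by
          exact_mod_cast Nat.pos_iff_ne_zero.mp hk
        have hxk : |x| ^ k ≠ 0 := pow_ne_zero _ (by simpa using hx0)
        push_cast
        simp only [Real.norm_eq_abs, abs_mul, abs_pow, abs_of_pos h1, abs_of_pos h2,
          abs_of_pos (show (0:ℝ) < (k:ℝ)+1 by positivity)]
        rw [abs_of_pos (show (0:ℝ) < (k:ℝ) from by positivity)]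
        field_simp
      exact Tendsto.congr' (this.mono fun k hk => hk.symm)
        (by simpa using (tendsto_ratio' β).mul (tendsto_const_nhds (x := |x|)))
    · exact mul_ne_zero (mul_ne_zero (by exact_mod_cast Nat.pos_iff_ne_zero.mp hk)
        (binCoef_pos hβ k).ne') (pow_ne_zero _ hx0)

lemma summable_deriv_binCoef {β : ℝ} (hβ : 0 < β) {x : ℝ} (hx : |x| < 1) :
    Summable (fun k : ℕ => binCoef β k * ((k:ℝ) * x ^ (k - 1))) := by
  rcases eq_or_ne x 0 with rfl | hx0
  · apply summable_of_ne_finset_zero (s := {0, 1})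
    intro k hk
    simp only [Finset.mem_insert, Finset.mem_singleton, not_or] at hk
    have : k - 1 ≠ 0 := by omega
    simp [zero_pow this]
  · have := (summable_nat_mul_binCoef hβ hx).mul_left x⁻¹
    apply this.congr
    intro k
    rcases Nat.eq_zero_or_pos k with rfl | hk
    · simp
    · have : x ^ k = x * x ^ (k - 1) := by
        conv_lhs => rw [show k = 1 + (k-1) by omega]
        rw [pow_add, pow_one]
      rw [this]
      field_simp

lemma hasDerivAt_binCoef_sum {β : ℝ} (hβ : 0 < β) {y : ℝ} (hy : |y| < 1) :
    HasDerivAt (fun z => ∑' k : ℕ, binCoef β k * z ^ k)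
      (∑' k : ℕ, binCoef β k * ((k:ℝ) * y ^ (k - 1))) y := by
  set r : ℝ := (|y| + 1) / 2 with hr
  have hr1 : r < 1 := by rw [hr]; linarith
  have hyr : |y| < r := by rw [hr]; linarith [abs_nonneg y]
  have hr0 : 0 < r := by positivity
  have hrabs : |r| < 1 := by rwa [abs_of_pos hr0]
  apply hasDerivAt_tsum_of_isPreconnected (summable_deriv_binCoef hβ hrabs)
    (isOpen_Ioo (a := -r) (b := r)) (isPreconnected_Ioo)
    (fun k z _ => (hasDerivAt_pow k z).const_mul (binCoef β k))
    (fun k z hz => ?_) (Set.mem_Ioo.2 ⟨by linarith, hr0⟩)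
    (by simpa using summable_binCoef hβ (x := (0:ℝ)) (by norm_num))
    (abs_lt.1 hyr)
  · have hzr : |z| ≤ r := le_of_lt (abs_lt.2 ⟨hz.1, hz.2⟩)
    have h1 : (0:ℝ) < binCoef β k := binCoef_pos hβ k
    simp only [Real.norm_eq_abs, abs_mul, abs_of_pos h1, Nat.abs_cast, abs_pow]
    gcongr

lemma ode_binCoef {β : ℝ} (hβ : 0 < β) {y : ℝ} (hy : |y| < 1) :
    (1 - y) * (∑' k : ℕ, binCoef β k * ((k:ℝ) * y ^ (k - 1)))
      = β * ∑' k : ℕ, binCoef β k * y ^ k := by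
  have hS := summable_binCoef hβ hy
  have hE := summable_nat_mul_binCoef hβ hy
  have hD := summable_deriv_binCoef hβ hy
  have hG : Summable (fun k : ℕ => ((k:ℝ) + β) * binCoef β k * y ^ k) := by
    apply (hE.add (hS.mul_left β)).congr
    intro k; ring
  have h1 : ∑' k : ℕ, binCoef β k * ((k:ℝ) * y ^ (k - 1))
      = ∑' k : ℕ, ((k:ℝ) + β) * binCoef β k * y ^ k := by
    rw [Summable.tsum_eq_zero_add hD]
    simp only [Nat.cast_zero, zero_mul, mul_zero, zero_add]
    apply tsum_congr
    intro k
    have hk1 : ((k:ℝ) + 1) ≠ 0 := by positivity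
    rw [binCoef_succ hβ]
    simp only [Nat.add_sub_cancel, Nat.cast_add, Nat.cast_one]
    field_simp
  have h2 : y * (∑' k : ℕ, binCoef β k * ((k:ℝ) * y ^ (k - 1)))
      = ∑' k : ℕ, (k:ℝ) * binCoef β k * y ^ k := by
    rw [← tsum_mul_left]
    apply tsum_congr
    intro k
    rcases Nat.eq_zero_or_pos k with rfl | hk
    · simp
    · have : y ^ k = y * y ^ (k - 1) := by
        conv_lhs => rw [show k = 1 + (k-1) by omega]
        rw [pow_add, pow_one]
      rw [this]; ring
  have h3 : ∑' k : ℕ, ((k:ℝ) + β) * binCoef β k * y ^ k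
      - ∑' k : ℕ, (k:ℝ) * binCoef β k * y ^ k
      = β * ∑' k : ℕ, binCoef β k * y ^ k := by
    rw [← Summable.tsum_sub hG hE, ← tsum_mul_left]
    apply tsum_congr; intro k; ring
  calc (1 - y) * (∑' k : ℕ, binCoef β k * ((k:ℝ) * y ^ (k - 1)))
      = (∑' k : ℕ, binCoef β k * ((k:ℝ) * y ^ (k - 1)))
        - y * (∑' k : ℕ, binCoef β k * ((k:ℝ) * y ^ (k - 1))) := by ring
    _ = β * ∑' k : ℕ, binCoef β k * y ^ k := by rw [h2, h1]; exact h3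

lemma hasSum_binCoef {β : ℝ} (hβ : 0 < β) {x : ℝ} (hx0 : 0 ≤ x) (hx1 : x < 1) :
    HasSum (fun k : ℕ => binCoef β k * x ^ k) ((1 - x) ^ (-β)) := by
  have hxabs : |x| < 1 := abs_lt.2 ⟨by linarith, hx1⟩
  have hS := summable_binCoef hβ hxabs
  set g : ℝ → ℝ := fun z => ∑' k : ℕ, binCoef β k * z ^ k with hg
  have hzero : ∀ y, 0 ≤ y → y < 1 →
      HasDerivAt (fun z => (1 - z) ^ β * g z) 0 y := by
    intro y hy0 hy1
    have hyabs : |y| < 1 := abs_lt.2 ⟨by linarith, hy1⟩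
    have h1y : (0:ℝ) < 1 - y := by linarith
    have hd := hasDerivAt_binCoef_sum hβ hyabs
    have hp : HasDerivAt (fun z : ℝ => (1 - z) ^ β) ((-1) * β * (1 - y) ^ (β - 1)) y := by
      exact ((hasDerivAt_id y).const_sub 1).rpow_const (Or.inl h1y.ne')
    have := hp.mul hd
    refine HasDerivAt.congr_deriv this ?_
    symm
    have hsplit : (1 - y) ^ β = (1 - y) ^ (β - 1) * (1 - y) := by
      conv_lhs => rw [show β = (β - 1) + 1 by ring]
      rw [Real.rpow_add_one h1y.ne']
    rw [hsplit]
    have hode := ode_binCoef hβ hyabs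
    linear_combination (-((1 - y) ^ (β - 1))) * hode
  have hconst : (1 - x) ^ β * g x = 1 := by
    have := constant_of_has_deriv_right_zero (f := fun z => (1 - z) ^ β * g z)
      (a := 0) (b := x)
      (fun y hy => ((hzero y hy.1 (lt_of_le_of_lt hy.2 hx1)).continuousAt).continuousWithinAt)
      (fun y hy => ((hzero y hy.1 (lt_of_lt_of_le hy.2 (le_of_lt hx1))).hasDerivWithinAt))
      x (Set.mem_Icc.2 ⟨hx0, le_refl x⟩)
    have hg0 : g 0 = 1 := by
      have h00 : g 0 = ∑' k : ℕ, binCoef β k * (0:ℝ) ^ k := rfl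
      rw [h00, tsum_eq_single 0 (fun k hk => by simp [zero_pow hk])]
      simp [binCoef_zero hβ]
    rw [this]
    simp [hg0]
  have h1x : (0:ℝ) < 1 - x := by linarith
  have hne : (1 - x) ^ β ≠ 0 := (Real.rpow_pos_of_pos h1x β).ne'
  have : g x = (1 - x) ^ (-β) := by
    rw [Real.rpow_neg h1x.le]
    field_simp at hconst ⊢
    linarith [hconst]
  exact this ▸ hS.hasSum



lemma hasSum_multi (m : ℕ) : ∀ (β : ℝ), 0 < β → ∀ (x : Fin m → ℝ), (∀ i, 0 ≤ x i) →
    (∑ i, x i) < 1 →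
    HasSum (fun q : Fin m → ℕ =>
      Real.Gamma ((∑ i, q i : ℕ) + β) / (Real.Gamma β * ∏ i, ((q i).factorial : ℝ)) *
      ∏ i, x i ^ q i)
      ((1 - ∑ i, x i) ^ (-β)) := by
  induction m with
  | zero =>
    intro β hβ x hx hsum
    have h : ∀ q : Fin 0 → ℕ, (Real.Gamma ((∑ i, q i : ℕ) + β) /
        (Real.Gamma β * ∏ i, ((q i).factorial : ℝ)) * ∏ i, x i ^ q i) = 1 := by
      intro q
      simp [Finset.univ_eq_empty, (Real.Gamma_pos_of_pos hβ).ne']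
    have h0 := hasSum_single (f := fun q : Fin 0 → ℕ =>
      Real.Gamma ((∑ i, q i : ℕ) + β) / (Real.Gamma β * ∏ i, ((q i).factorial : ℝ)) *
      ∏ i, x i ^ q i) default (fun b hb => absurd (Subsingleton.elim b default) hb)
    have hg : ((1 : ℝ) - ∑ i, x i) ^ (-β) = 1 := by simp
    convert h0 using 1
    rw [hg]
    exact (h default).symm
  | succ m ih =>
    intro β hβ x hx hsum
    set x0 : ℝ := x 0 with hx0def
    set xt : Fin m → ℝ := fun i => x i.succ with hxtdef
    set s' : ℝ := ∑ i, xt i with hs'def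
    have hsplitsum : ∑ i, x i = x0 + s' := by
      rw [hs'def, hx0def, Fin.sum_univ_succ]
    have hx00 : 0 ≤ x0 := hx 0
    have hs'0 : 0 ≤ s' := Finset.sum_nonneg fun i _ => hx _
    have hs'1 : x0 + s' < 1 := hsplitsum ▸ hsum
    have h1s' : 0 < 1 - s' := by linarith
    set X : ℝ := x0 / (1 - s') with hXdef
    have hX0 : 0 ≤ X := div_nonneg hx00 h1s'.le
    have hX1 : X < 1 := (div_lt_one h1s').2 (by linarith)
    set f : ℕ × (Fin m → ℕ) → ℝ := fun p =>
      Real.Gamma (((p.1 + ∑ i, p.2 i : ℕ) : ℝ) + β) /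
        (Real.Gamma β * ((p.1.factorial : ℝ) * ∏ i, ((p.2 i).factorial : ℝ))) *
        (x0 ^ p.1 * ∏ i, xt i ^ p.2 i) with hfdef
    -- fiberwise sums
    have hfiber : ∀ k : ℕ, HasSum (fun q' : Fin m → ℕ => f (k, q'))
        ((binCoef β k * x0 ^ k) * (1 - s') ^ (-((k:ℝ) + β))) := by
      intro k
      have hβ' : (0:ℝ) < (k:ℝ) + β := by positivity
      have := (ih ((k:ℝ) + β) hβ' xt (fun i => hx _) (by rw [← hs'def]; linarith)).mul_left
        (binCoef β k * x0 ^ k)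
      rw [← hs'def] at this
      apply this.congr_fun
      intro q'
      rw [hfdef, binCoef]
      have hΓ : Real.Gamma ((k:ℝ) + β) ≠ 0 := (Real.Gamma_pos_of_pos hβ').ne'
      have hΓβ : Real.Gamma β ≠ 0 := (Real.Gamma_pos_of_pos hβ).ne'
      have hfk : (k.factorial : ℝ) ≠ 0 := by exact_mod_cast k.factorial_pos.ne'
      have hfq : (∏ i, ((q' i).factorial : ℝ)) ≠ 0 :=
        Finset.prod_ne_zero_iff.2 fun i _ => by exact_mod_cast (q' i).factorial_pos.ne'
      have hcast : ((∑ i, q' i : ℕ) : ℝ) + ((k:ℝ) + β) = (((k + ∑ i, q' i : ℕ)) : ℝ) + β := by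
        push_cast; ring
      rw [hcast]
      field_simp
    -- outer sum
    have houter : HasSum (fun k : ℕ => (binCoef β k * x0 ^ k) * (1 - s') ^ (-((k:ℝ) + β)))
        ((1 - (x0 + s')) ^ (-β)) := by
      have hkey : ∀ k : ℕ, (binCoef β k * x0 ^ k) * (1 - s') ^ (-((k:ℝ) + β))
          = (1 - s') ^ (-β) * (binCoef β k * X ^ k) := by
        intro k
        have h2 : (1 - s') ^ (-(k:ℝ)) = ((1 - s') ^ k)⁻¹ := by
          rw [Real.rpow_neg h1s'.le, Real.rpow_natCast]
        have h1 : (1 - s') ^ (-((k:ℝ) + β)) = (1 - s') ^ (-β) * ((1 - s') ^ k)⁻¹ := by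
          rw [show -((k:ℝ) + β) = -β + (-(k:ℝ)) by ring, Real.rpow_add h1s', h2]
        rw [h1, hXdef, div_pow]
        ring
      have := (hasSum_binCoef hβ hX0 hX1).mul_left ((1 - s') ^ (-β))
      have hfin : (1 - s') ^ (-β) * (1 - X) ^ (-β) = (1 - (x0 + s')) ^ (-β) := by
        rw [← Real.mul_rpow h1s'.le (by linarith : (0:ℝ) ≤ 1 - X)]
        congr 1
        rw [hXdef]
        field_simp
        ring
      rw [hfin] at this
      exact this.congr_fun fun k => hkey k
    -- summability of f on the product
    have hfnonneg : 0 ≤ f := by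
      intro p
      rw [hfdef]
      have h1 : (0:ℝ) < ((p.1 + ∑ i, p.2 i : ℕ) : ℝ) + β := by positivity
      have := Real.Gamma_pos_of_pos h1
      have := Real.Gamma_pos_of_pos hβ
      have h2 : (0:ℝ) < (p.1.factorial : ℝ) := by exact_mod_cast p.1.factorial_pos
      have h3 : (0:ℝ) < ∏ i, ((p.2 i).factorial : ℝ) :=
        Finset.prod_pos fun i _ => by exact_mod_cast (p.2 i).factorial_pos
      have h4 : (0:ℝ) ≤ x0 ^ p.1 * ∏ i, xt i ^ p.2 i :=
        mul_nonneg (pow_nonneg hx00 _) (Finset.prod_nonneg fun i _ => pow_nonneg (hx _) _)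
      positivity
    have hsummable : Summable f := by
      rw [summable_prod_of_nonneg hfnonneg]
      refine ⟨fun k => (hfiber k).summable, ?_⟩
      apply houter.summable.congr
      intro k
      exact ((hfiber k).tsum_eq).symm
    have hHasSum : HasSum f ((1 - (x0 + s')) ^ (-β)) := by
      have h := hsummable.hasSum
      have : ∑' p, f p = (1 - (x0 + s')) ^ (-β) := by
        rw [Summable.tsum_prod' hsummable (fun k => (hfiber k).summable)]
        calc ∑' (k : ℕ) (q' : Fin m → ℕ), f (k, q')
            = ∑' k : ℕ, (binCoef β k * x0 ^ k) * (1 - s') ^ (-((k:ℝ) + β)) :=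
              tsum_congr fun k => (hfiber k).tsum_eq
          _ = (1 - (x0 + s')) ^ (-β) := houter.tsum_eq
      rwa [this] at h
    -- transfer along the equivalence
    have := (Fin.consEquiv (fun _ : Fin (m+1) => ℕ)).symm.hasSum_iff.2 hHasSum
    rw [← hsplitsum] at this
    apply this.congr_fun
    intro q
    rw [hfdef]
    rw [Fin.sum_univ_succ (f := fun i => q i), Fin.prod_univ_succ (f := fun i => ((q i).factorial : ℝ)),
      Fin.prod_univ_succ (f := fun i => x i ^ q i)]
    rfl



lemma coeffs_eq_zero {b : ℕ → ℝ}
    (hsum : Summable fun k => |b k| * ((1:ℝ)/2) ^ k)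
    (hz : ∀ u : ℝ, 0 ≤ u → u < 1 → ∑' k, b k * u ^ k = 0) :
    ∀ k, b k = 0 := by
  set p := FormalMultilinearSeries.ofScalars ℝ b with hp
  have hrad : (((1:ℝ≥0)/2 : ℝ≥0) : ℝ≥0∞) ≤ p.radius := by
    apply p.le_radius_of_summable_norm
    apply hsum.congr
    intro n
    rw [hp, FormalMultilinearSeries.ofScalars_norm]
    norm_num
  have hpos : (0 : ℝ≥0∞) < (((1:ℝ≥0)/2 : ℝ≥0) : ℝ≥0∞) := by norm_num
  have hball : HasFPowerSeriesOnBall p.sum p 0 (((1:ℝ≥0)/2 : ℝ≥0)) :=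
    (p.hasFPowerSeriesOnBall (lt_of_lt_of_le hpos hrad)).mono hpos hrad
  have hsumval : ∀ x : ℝ, p.sum x = ∑' k, b k * x ^ k := by
    intro x
    unfold FormalMultilinearSeries.sum
    refine tsum_congr fun n => ?_
    rw [hp, FormalMultilinearSeries.ofScalars_apply_eq]
    exact smul_eq_mul ..
  have hU : AnalyticOnNhd ℝ p.sum (Metric.eball (0:ℝ) (((1:ℝ≥0)/2 : ℝ≥0))) :=
    hball.analyticOnNhd
  rw [Metric.emetric_ball_nnreal] at hU
  have hpre : IsPreconnected (Metric.ball (0:ℝ) (((1:ℝ≥0)/2 : ℝ≥0) : ℝ)) :=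
    (convex_ball (0:ℝ) _).isPreconnected
  have h₀mem : (1/4 : ℝ) ∈ Metric.ball (0:ℝ) (((1:ℝ≥0)/2 : ℝ≥0) : ℝ) := by
    simp [Metric.mem_ball, Real.dist_eq]
    norm_num
  have hev : p.sum =ᶠ[𝓝 (1/4 : ℝ)] 0 := by
    apply Filter.eventuallyEq_of_mem
      (Ioo_mem_nhds (by norm_num : (0:ℝ) < 1/4) (by norm_num : (1/4:ℝ) < 1/2))
    intro u hu
    have := hz u hu.1.le (lt_trans hu.2 one_half_lt_one)
    simp only [Pi.zero_apply]
    rw [hsumval]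
    exact this
  have hEq := hU.eqOn_zero_of_preconnected_of_eventuallyEq_zero hpre h₀mem hev
  have h0mem2 : (0:ℝ) ∈ Metric.ball (0:ℝ) (((1:ℝ≥0)/2 : ℝ≥0) : ℝ) := by
    simp only [Metric.mem_ball, dist_self]
    norm_num
  have hev0 : p.sum =ᶠ[𝓝 (0:ℝ)] 0 :=
    Filter.eventuallyEq_of_mem (Metric.isOpen_ball.mem_nhds h0mem2) hEq
  have hp0 : p = 0 := (hball.hasFPowerSeriesAt).eq_zero_of_eventually hev0
  intro k
  rw [FormalMultilinearSeries.ofScalars_series_eq_zero (𝕜 := ℝ) ℝ] at hp0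
  exact congrFun hp0 k


open Finset


/-- For `α > 0` and a bounded sequence `c : ℕ → ℝ`, the function
`w ↦ (1-‖w‖²)^α ∑_{q∈ℕᵐ} c(|q|) Γ(|q|+α)/(Γ(α)∏Γ(qᵢ+1)) |w|^{2q}` on the open unit
ball of `ℂᵐ` is constant iff the sequence `c` is constant. -/
theorem stmt15 (m : ℕ) (hm : 0 < m) (α : ℝ) (hα : 0 < α)
    (c : ℕ → ℝ) (hc : ∃ M : ℝ, ∀ k, |c k| ≤ M) :
    (∃ C : ℝ, ∀ w : EuclideanSpace ℂ (Fin m), ‖w‖ < 1 →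
      (1 - ‖w‖ ^ 2) ^ α *
        ∑' q : Fin m → ℕ,
          c (∑ i, q i) * Real.Gamma ((∑ i, q i : ℕ) + α) /
            (Real.Gamma α * ∏ i, Real.Gamma ((q i : ℝ) + 1)) *
            ∏ i, ‖w i‖ ^ (2 * q i)
      = C)
    ↔ (∃ C : ℝ, ∀ k : ℕ, c k = C) := by
  obtain ⟨M, hM⟩ := hc
  constructor
  · -- forward direction
    rintro ⟨C, hC⟩
    refine ⟨C, fun k₀ => ?_⟩
    set i0 : Fin m := ⟨0, hm⟩ with hi0
    -- step 1: the one-dimensional consequence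
    have hzero : ∀ u : ℝ, 0 ≤ u → u < 1 →
        (1 - u) ^ α * ∑' k : ℕ, c k * binCoef α k * u ^ k = C := by
      intro u hu0 hu1
      set t : ℝ := Real.sqrt u with htdef
      have ht0 : 0 ≤ t := Real.sqrt_nonneg u
      have ht2 : t ^ 2 = u := Real.sq_sqrt hu0
      have ht1 : t < 1 := by nlinarith
      set w : EuclideanSpace ℂ (Fin m) := EuclideanSpace.single i0 (t : ℂ) with hwdef
      have hnormw : ‖w‖ = t := by
        rw [hwdef, EuclideanSpace.norm_single, Complex.norm_real, Real.norm_eq_abs,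
          abs_of_nonneg ht0]
      have hCw := hC w (by rw [hnormw]; exact ht1)
      rw [hnormw, ht2] at hCw
      set F : (Fin m → ℕ) → ℝ := fun q =>
        c (∑ i, q i) * Real.Gamma ((∑ i, q i : ℕ) + α) /
          (Real.Gamma α * ∏ i, Real.Gamma ((q i : ℝ) + 1)) *
          ∏ i, ‖w i‖ ^ (2 * q i) with hFdef
      have hwap : ∀ j, w j = if j = i0 then (t:ℂ) else 0 := by
        intro j
        rw [hwdef, EuclideanSpace.single_apply]
      set ι : ℕ → (Fin m → ℕ) := fun k => Pi.single i0 k with hιdef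
      have hι : Function.Injective ι := by
        intro a b hab
        have := congrFun hab i0
        simpa [hιdef, Pi.single_eq_same] using this
      have hsupp : Function.support F ⊆ Set.range ι := by
        intro q hq
        by_cases hcase : ∀ j, j ≠ i0 → q j = 0
        · exact ⟨q i0, funext fun j => by
            by_cases hj : j = i0
            · subst hj; simp [hιdef, Pi.single_eq_same]
            · rw [hιdef]; simp only [Pi.single_eq_of_ne hj]; exact (hcase j hj).symm⟩
        · exfalso
          apply hq
          push_neg at hcase
          obtain ⟨j, hj, hqj⟩ := hcase
          have hfac : ‖w j‖ ^ (2 * q j) = 0 := by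
            rw [hwap j, if_neg hj]
            simp [zero_pow (by omega : 2 * q j ≠ 0)]
          rw [hFdef]
          simp only
          rw [show (∏ i, ‖w i‖ ^ (2 * q i)) = 0 from
            Finset.prod_eq_zero (Finset.mem_univ j) hfac, mul_zero]
      have hcomp : ∀ k : ℕ, F (ι k) = c k * binCoef α k * (t ^ 2) ^ k := by
        intro k
        have hsum_ι : ∑ i, ι k i = k := by
          rw [hιdef]
          simp [Finset.sum_pi_single']
        have hprod_Γ : ∏ i, Real.Gamma ((ι k i : ℝ) + 1) = (k.factorial : ℝ) := by
          rw [Finset.prod_eq_single i0 (fun j _ hj => by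
              rw [hιdef]; simp only [Pi.single_eq_of_ne hj]
              norm_num [Real.Gamma_one])
            (fun h => absurd (Finset.mem_univ i0) h)]
          rw [hιdef]
          simp only [Pi.single_eq_same]
          exact_mod_cast Real.Gamma_nat_eq_factorial k
        have hprod_abs : ∏ i, ‖w i‖ ^ (2 * ι k i) = (t ^ 2) ^ k := by
          rw [Finset.prod_eq_single i0 (fun j _ hj => by
              rw [hιdef]; simp only [Pi.single_eq_of_ne hj]
              simp)
            (fun h => absurd (Finset.mem_univ i0) h)]
          rw [hιdef]
          simp only [Pi.single_eq_same]
          rw [hwap i0, if_pos rfl]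
          rw [Complex.norm_real, Real.norm_eq_abs, abs_of_nonneg ht0, pow_mul]
        rw [hFdef]
        simp only
        rw [hsum_ι, hprod_Γ, hprod_abs, binCoef]
        ring
      have hred : ∑' k : ℕ, F (ι k) = ∑' q, F q := hι.tsum_eq hsupp
      rw [← hred] at hCw
      rw [ht2] at hcomp
      rw [tsum_congr hcomp] at hCw
      exact hCw
    -- step 2: summabilities
    have hsummand : ∀ u : ℝ, 0 ≤ u → u < 1 →
        Summable (fun k : ℕ => c k * binCoef α k * u ^ k) := by
      intro u hu0 hu1
      have hb := (hasSum_binCoef hα hu0 hu1).summable.mul_left M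
      apply Summable.of_norm
      apply hb.of_nonneg_of_le (fun k => norm_nonneg _)
      intro k
      have h1 : 0 ≤ binCoef α k * u ^ k :=
        mul_nonneg (binCoef_pos hα k).le (pow_nonneg hu0 k)
      rw [Real.norm_eq_abs, mul_assoc, abs_mul, abs_of_nonneg h1]
      exact mul_le_mul_of_nonneg_right (hM k) h1
    -- step 3: the coefficients vanish
    have hbz : ∀ k, (c k - C) * binCoef α k = 0 := by
      apply coeffs_eq_zero
      · have hb := (hasSum_binCoef hα (by norm_num : (0:ℝ) ≤ 1/2)
          (by norm_num : (1/2:ℝ) < 1)).summable.mul_left (M + |C|)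
        apply hb.of_nonneg_of_le (fun k => by positivity)
        intro k
        have h1 : 0 ≤ binCoef α k * ((1:ℝ)/2) ^ k :=
          mul_nonneg (binCoef_pos hα k).le (by positivity)
        have h2 : |(c k - C) * binCoef α k| ≤ (M + |C|) * binCoef α k := by
          rw [abs_mul, abs_of_nonneg (binCoef_pos hα k).le]
          apply mul_le_mul_of_nonneg_right _ (binCoef_pos hα k).le
          calc |c k - C| ≤ |c k| + |C| := abs_sub _ _
            _ ≤ M + |C| := by linarith [hM k]
        calc |(c k - C) * binCoef α k| * ((1:ℝ)/2) ^ k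
            ≤ ((M + |C|) * binCoef α k) * ((1:ℝ)/2) ^ k := by
              apply mul_le_mul_of_nonneg_right h2 (by positivity)
          _ = (M + |C|) * (binCoef α k * ((1:ℝ)/2) ^ k) := by ring
      · intro u hu0 hu1
        have hS1 := hsummand u hu0 hu1
        have hS2 := (hasSum_binCoef hα hu0 hu1).summable.mul_left C
        have h1u : (0:ℝ) < 1 - u := by linarith
        have hpow : (0:ℝ) < (1 - u) ^ α := Real.rpow_pos_of_pos h1u α
        have hT : ∑' k : ℕ, c k * binCoef α k * u ^ k = C * (1 - u) ^ (-α) := by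
          have := hzero u hu0 hu1
          rw [Real.rpow_neg h1u.le]
          field_simp
          linarith [this]
        have hT2 : ∑' k : ℕ, C * (binCoef α k * u ^ k) = C * (1 - u) ^ (-α) :=
          ((hasSum_binCoef hα hu0 hu1).mul_left C).tsum_eq
        have heq : ∀ k : ℕ, (c k - C) * binCoef α k * u ^ k
            = c k * binCoef α k * u ^ k - C * (binCoef α k * u ^ k) := by
          intro k; ring
        rw [tsum_congr heq, Summable.tsum_sub hS1 (hS2.congr (fun k => rfl)), hT, hT2, sub_self]
    have := hbz k₀
    rcases mul_eq_zero.1 this with h | h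
    · linarith [sub_eq_zero.1 h]
    · exact absurd h (binCoef_pos hα k₀).ne'
  · -- reverse direction
    rintro ⟨C, hC⟩
    refine ⟨C, fun w hw => ?_⟩
    set x : Fin m → ℝ := fun i => ‖w i‖ ^ 2 with hxdef
    have hx0 : ∀ i, 0 ≤ x i := fun i => sq_nonneg _
    have hxsum : ∑ i, x i = ‖w‖ ^ 2 := by
      rw [EuclideanSpace.norm_eq,
        Real.sq_sqrt (Finset.sum_nonneg fun i _ => sq_nonneg _)]
    have hs1 : ‖w‖ ^ 2 < 1 := by nlinarith [norm_nonneg w]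
    have hG := hasSum_multi m α hα x hx0 (by rw [hxsum]; exact hs1)
    rw [hxsum] at hG
    have hterm : ∀ q : Fin m → ℕ,
        c (∑ i, q i) * Real.Gamma ((∑ i, q i : ℕ) + α) /
          (Real.Gamma α * ∏ i, Real.Gamma ((q i : ℝ) + 1)) *
          ∏ i, ‖w i‖ ^ (2 * q i)
        = C * (Real.Gamma ((∑ i, q i : ℕ) + α) /
            (Real.Gamma α * ∏ i, ((q i).factorial : ℝ)) * ∏ i, x i ^ q i) := by
      intro q
      rw [hC (∑ i, q i)]
      have h1 : ∏ i, Real.Gamma ((q i : ℝ) + 1) = ∏ i, ((q i).factorial : ℝ) :=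
        Finset.prod_congr rfl fun i _ => by exact_mod_cast Real.Gamma_nat_eq_factorial (q i)
      have h2 : ∏ i, ‖w i‖ ^ (2 * q i) = ∏ i, x i ^ q i :=
        Finset.prod_congr rfl fun i _ => by rw [hxdef, pow_mul]
      rw [h1, h2]
      ring
    rw [tsum_congr hterm, tsum_mul_left, hG.tsum_eq]
    have h1s : (0:ℝ) < 1 - ‖w‖ ^ 2 := by linarith
    have hpow : (0:ℝ) < (1 - ‖w‖ ^ 2) ^ α := Real.rpow_pos_of_pos h1s α
    rw [Real.rpow_neg h1s.le]
    field_simp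
end
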